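/- arXiv:1610.05898 — 6 statements merged into one kernel-verified Lean document; each statement's English description precedes it below -/
import Mathlib

section
/- Let (M, Ω) be a symplectic manifold, φ: N → M a smooth symplectic immersion, ∇ a symplectic connection on (M, Ω), and ∇̄ the induced symplectic connection on (N, φ^*(Ω)) with second fundamental form Π. For p ∈ N, a 2-dimensional symplectic subspace L ⊂ T_pN spanned by X, Y, and Z ∈ L, the symplectic curvature quadratic forms satisfy scurv^{M,∇}_{φ(p), Tφ(p)(L)}(Tφ(p)(Z)) = scurv^{N,∇̄}_{p,L}(Z) + 2Ω(Π(X, Z), Π(Y, Z)) / φ^*(Ω)(X, Y). -/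
/- Chart model of a symplectic manifold: the manifold is modeled by (a global affine chart of)
a finite-dimensional real normed vector space `E`; a symplectic form is a smooth field of
nondegenerate antisymmetric bilinear forms (closedness is automatic in the presence of a
compatible torsion-free connection), and a symplectic connection is recorded by its
(torsion-free) Christoffel symbols, preserving the symplectic form. -/

structure SympForm (E : Type*) [NormedAddCommGroup E] [NormedSpace ℝ E] where
  ω : E → E →L[ℝ] E →L[ℝ] ℝ
  smooth : ContDiff ℝ (⊤ : ℕ∞) ω
  skew : ∀ x u v, ω x u v = - ω x v u
  nondeg : ∀ x u, (∀ v, ω x u v = 0) → u = 0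

structure SympConnection {E : Type*} [NormedAddCommGroup E] [NormedSpace ℝ E]
    (Ω : SympForm E) where
  Γ : E → E →L[ℝ] E →L[ℝ] E
  smooth : ContDiff ℝ (⊤ : ℕ∞) Γ
  symm : ∀ x u v, Γ x u v = Γ x v u
  parallel : ∀ x u v w, fderiv ℝ Ω.ω x u v w = Ω.ω x (Γ x u v) w + Ω.ω x v (Γ x u w)

variable {E : Type*} [NormedAddCommGroup E] [NormedSpace ℝ E]

/-- Curvature `R(u,v)w = ∇_u∇_v w - ∇_v∇_u w - ∇_{[u,v]}w` of a symplectic connection,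
evaluated on constant vector fields of the chart, as an operator in `w`. -/
noncomputable def curvOp {Ω : SympForm E} (C : SympConnection Ω) (x u v : E) : E →L[ℝ] E :=
  fderiv ℝ C.Γ x u v - fderiv ℝ C.Γ x v u
    + (C.Γ x u).comp (C.Γ x v) - (C.Γ x v).comp (C.Γ x u)

/-- Lowered curvature `R_{ijkl} = R_{ijk}{}^p Ω_{pl}`, i.e. `Ω(R(u,v)w, z)`. -/
noncomputable def Rlow {Ω : SympForm E} (C : SympConnection Ω) (x u v w z : E) : ℝ :=
  Ω.ω x (curvOp C x u v w) z

/-- The symplectic curvature quadratic form `scurv_{x,L}(Z)` of the plane `L` spanned by `X, Y`. -/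
noncomputable def scurv {Ω : SympForm E} (C : SympConnection Ω) (x X Y Z : E) : ℝ :=
  Rlow C x X Y Z Z / Ω.ω x X Y

/-- Ricci tensor `R_{ij} = R_{pij}{}^p`: the trace of `w ↦ R(w,u)v`. -/
noncomputable def ricci {Ω : SympForm E} (C : SympConnection Ω) (x u v : E) : ℝ :=
  LinearMap.trace ℝ E
    ((((fderiv ℝ C.Γ x).flip u).flip v - ((fderiv ℝ C.Γ x) u).flip v
      + (C.Γ x).flip (C.Γ x u v) - (C.Γ x u).comp ((C.Γ x).flip v)).toLinearMap)

/-- Covariant derivative `(∇_w Ric)(u,v)` of the Ricci tensor. -/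
noncomputable def covDerivRic {Ω : SympForm E} (C : SympConnection Ω) (x w u v : E) : ℝ :=
  fderiv ℝ (fun y => ricci C y u v) x w - ricci C x (C.Γ x w u) v - ricci C x u (C.Γ x w v)

/-- Covariant derivative `(∇_a R)(u,v,w,z)` of the (lowered) curvature tensor. -/
noncomputable def covDerivR {Ω : SympForm E} (C : SympConnection Ω) (x a u v w z : E) : ℝ :=
  fderiv ℝ (fun y => Rlow C y u v w z) x a
    - Rlow C x (C.Γ x a u) v w z - Rlow C x u (C.Γ x a v) w z
    - Rlow C x u v (C.Γ x a w) z - Rlow C x u v w (C.Γ x a z)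

/-- `∇` is locally symmetric: `∇R = 0`. -/
def LocallySymmetric {Ω : SympForm E} (C : SympConnection Ω) : Prop :=
  ∀ x a u v w z, covDerivR C x a u v w z = 0

/-- The Ricci tensor is parallel. -/
def ParallelRicci {Ω : SympForm E} (C : SympConnection Ω) : Prop :=
  ∀ x w u v, covDerivRic C x w u v = 0

/-- The symplectic Weyl tensor
`W_{ijkl} = R_{ijkl} − (1/(n+1))(Ω_{i(k}R_{l)j} − Ω_{j(k}R_{l)i} + Ω_{ij}R_{kl})`
on a manifold of dimension `2n`. -/
noncomputable def weyl (n : ℕ) {Ω : SympForm E} (C : SympConnection Ω) (x u v w z : E) : ℝ :=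
  Rlow C x u v w z - (1 / ((n : ℝ) + 1)) *
    ((Ω.ω x u w * ricci C x z v + Ω.ω x u z * ricci C x w v) / 2
      - (Ω.ω x v w * ricci C x z u + Ω.ω x v z * ricci C x w u) / 2
      + Ω.ω x u v * ricci C x w z)

/-- `∇` is Weyl flat (of Ricci type): its symplectic Weyl tensor vanishes. -/
def WeylFlat (n : ℕ) {Ω : SympForm E} (C : SympConnection Ω) : Prop :=
  ∀ x u v w z, weyl n C x u v w z = 0

/-- `∇` is preferred: `∇_{(i}R_{jk)} = 0` (cyclic symmetrization suffices since `Ric` is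
symmetric in its last two arguments). -/
def Preferred {Ω : SympForm E} (C : SympConnection Ω) : Prop :=
  ∀ x u v w, covDerivRic C x u v w + covDerivRic C x v w u + covDerivRic C x w u v = 0

/-- Vanishing of the curvature one-form `ρ_i = ∇^p R_{ip}`: the index is raised with `Ω`, and
the `Ω`-contraction is encoded as the trace of any linear packaging `D` of `∇Ric` against `Ω`
(such a `D` exists and is unique by nondegeneracy of `Ω`). -/
def RhoZero {Ω : SympForm E} (C : SympConnection Ω) : Prop :=
  ∀ x u, ∀ D : E →ₗ[ℝ] E,
    (∀ w v, Ω.ω x (D w) v = covDerivRic C x w u v) → LinearMap.trace ℝ E D = 0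

/-- `A` is a parallel symmetric covariant 2-tensor field. -/
def IsParallelSym2 {Ω : SympForm E} (C : SympConnection Ω)
    (A : E → E →L[ℝ] E →L[ℝ] ℝ) : Prop :=
  (∀ x u v, A x u v = A x v u) ∧ Differentiable ℝ A ∧
    ∀ x u v w, fderiv ℝ A x u v w = A x (C.Γ x u v) w + A x v (C.Γ x u w)

/-- `∇` has constant symplectic sectional curvature: there is a parallel symmetric 2-tensor `A`
such that on every 2-dimensional symplectic subspace (spanned by `X, Y` with `Ω(X,Y) ≠ 0`)
the symplectic curvature quadratic form is the restriction of the quadratic form of `A`. -/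
def HasConstScurv {Ω : SympForm E} (C : SympConnection Ω) : Prop :=
  ∃ A : E → E →L[ℝ] E →L[ℝ] ℝ, IsParallelSym2 C A ∧
    ∀ x X Y, Ω.ω x X Y ≠ 0 →
      ∀ Z ∈ Submodule.span ℝ ({X, Y} : Set E), scurv C x X Y Z = A x Z Z

/-- Lie bracket of vector fields on the chart. -/
noncomputable def lieVF (X Y : E → E) (x : E) : E :=
  fderiv ℝ Y x (X x) - fderiv ℝ X x (Y x)

/-- Covariant derivative `∇_X Y` of vector fields on the chart. -/
noncomputable def covVF {Ω : SympForm E} (C : SympConnection Ω) (X Y : E → E) (x : E) : E :=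
  fderiv ℝ Y x (X x) + C.Γ x (X x) (Y x)

/-- Nijenhuis tensor of an endomorphism field, evaluated on constant vector fields. -/
noncomputable def nijTensor (A : E → E → E) (x u v : E) : E :=
  lieVF (fun y => A y u) (fun y => A y v) x
    - A x (lieVF (fun y => A y u) (fun _ => v) x)
    - A x (lieVF (fun _ => u) (fun y => A y v) x)
    + A x (A x (lieVF (fun _ => u) (fun _ => v) x))

/-- Covariant derivative along a curve `γ` of a field `V` along `γ`. -/
noncomputable def covAlong {Ω : SympForm E} (C : SympConnection Ω) (γ V : ℝ → E) (t : ℝ) : E :=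
  deriv V t + C.Γ (γ t) (deriv γ t) (V t)

/-- `(g,J,Ω)` has constant (para-)holomorphic sectional curvature `4c`:
`R_{ijkl} = 2c(Ω_{i(k}g_{l)j} − Ω_{j(k}g_{l)i} + Ω_{ij}g_{kl})`. -/
def ConstHoloSec {Ω : SympForm E} (C : SympConnection Ω) (g : E → E → E → ℝ) (c : ℝ) : Prop :=
  ∀ x u v w z, Rlow C x u v w z =
    2 * c * ((Ω.ω x u w * g x z v + Ω.ω x u z * g x w v) / 2
      - (Ω.ω x v w * g x z u + Ω.ω x v z * g x w u) / 2
      + Ω.ω x u v * g x w z)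

/-- `C` is the Levi-Civita connection of the metric `g`: `C` is torsion free and `∇g = 0`. -/
def IsLeviCivita {Ω : SympForm E} (C : SympConnection Ω) (g : E → E → E → ℝ) : Prop :=
  ∀ x u v w, fderiv ℝ (fun y => g y v w) x u = g x (C.Γ x u v) w + g x v (C.Γ x u w)

set_option maxHeartbeats 2000000 in
theorem key_lemma {E F : Type*}
    [NormedAddCommGroup E] [NormedSpace ℝ E]
    [NormedAddCommGroup F] [NormedSpace ℝ F]
    (Ω : SympForm E) (C : SympConnection Ω)
    (φ : F → E) (hφ : ContDiff ℝ (⊤ : ℕ∞) φ)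
    (ΩN : SympForm F)
    (hΩN : ∀ x u v, ΩN.ω x u v = Ω.ω (φ x) (fderiv ℝ φ x u) (fderiv ℝ φ x v))
    (CN : SympConnection ΩN)
    (sff : F → F → F → E)
    (hperp : ∀ x u v w, Ω.ω (φ x) (sff x u v) (fderiv ℝ φ x w) = 0)
    (x Z : F)
    (hGauss : ∀ (y u v : F), fderiv ℝ (fderiv ℝ φ) y u v
        + C.Γ (φ y) (fderiv ℝ φ y u) (fderiv ℝ φ y v)
      = fderiv ℝ φ y (CN.Γ y u v) + sff y u v)
    (a u : F) :
      Ω.ω (φ x) (C.Γ (φ x) (fderiv ℝ φ x a) (fderiv ℝ (fderiv ℝ φ) x u Z)) (fderiv ℝ φ x Z)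
    + Ω.ω (φ x) (C.Γ (φ x) (fderiv ℝ φ x a)
        (C.Γ (φ x) (fderiv ℝ φ x u) (fderiv ℝ φ x Z))) (fderiv ℝ φ x Z)
    + Ω.ω (φ x) (fderiv ℝ (fderiv ℝ φ) x u Z) (C.Γ (φ x) (fderiv ℝ φ x a) (fderiv ℝ φ x Z))
    + Ω.ω (φ x) (C.Γ (φ x) (fderiv ℝ φ x u) (fderiv ℝ φ x Z))
        (C.Γ (φ x) (fderiv ℝ φ x a) (fderiv ℝ φ x Z))
    + Ω.ω (φ x) (fderiv ℝ (fderiv ℝ (fderiv ℝ φ)) x a u Z) (fderiv ℝ φ x Z)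
    + Ω.ω (φ x) (C.Γ (φ x) (fderiv ℝ φ x u) (fderiv ℝ (fderiv ℝ φ) x a Z)) (fderiv ℝ φ x Z)
    + Ω.ω (φ x) (C.Γ (φ x) (fderiv ℝ (fderiv ℝ φ) x a u) (fderiv ℝ φ x Z)) (fderiv ℝ φ x Z)
    + Ω.ω (φ x) (fderiv ℝ C.Γ (φ x) (fderiv ℝ φ x a) (fderiv ℝ φ x u) (fderiv ℝ φ x Z))
        (fderiv ℝ φ x Z)
    + Ω.ω (φ x) (fderiv ℝ (fderiv ℝ φ) x u Z) (fderiv ℝ (fderiv ℝ φ) x a Z)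
    + Ω.ω (φ x) (C.Γ (φ x) (fderiv ℝ φ x u) (fderiv ℝ φ x Z)) (fderiv ℝ (fderiv ℝ φ) x a Z)
    = ΩN.ω x (CN.Γ x a (CN.Γ x u Z)) Z
    + ΩN.ω x (CN.Γ x u Z) (CN.Γ x a Z)
    + ΩN.ω x (fderiv ℝ CN.Γ x a u Z) Z := by
  have two_le : ((2:ℕ∞) : WithTop ℕ∞) ≤ ((⊤:ℕ∞) : WithTop ℕ∞) := by norm_cast
  have one_le : ((1:ℕ∞) : WithTop ℕ∞) ≤ ((⊤:ℕ∞) : WithTop ℕ∞) := by norm_cast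
  have hT : ContDiff ℝ (⊤ : ℕ∞) (fderiv ℝ φ) := hφ.fderiv_right (by exact_mod_cast le_top)
  have hT2 : ContDiff ℝ (⊤ : ℕ∞) (fderiv ℝ (fderiv ℝ φ)) :=
    hT.fderiv_right (by exact_mod_cast le_top)
  have hφd : HasFDerivAt φ (fderiv ℝ φ x) x := (hφ.differentiable (by simp) x).hasFDerivAt
  have hTd : HasFDerivAt (fderiv ℝ φ) (fderiv ℝ (fderiv ℝ φ) x) x :=
    (hT.differentiable (by simp) x).hasFDerivAt
  have hT2d : HasFDerivAt (fderiv ℝ (fderiv ℝ φ)) (fderiv ℝ (fderiv ℝ (fderiv ℝ φ)) x) x :=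
    (hT2.differentiable (by simp) x).hasFDerivAt
  have hΩd : HasFDerivAt Ω.ω (fderiv ℝ Ω.ω (φ x)) (φ x) :=
    (Ω.smooth.differentiable (by simp) _).hasFDerivAt
  have hΓd : HasFDerivAt C.Γ (fderiv ℝ C.Γ (φ x)) (φ x) :=
    (C.smooth.differentiable (by simp) _).hasFDerivAt
  have hΩNd : HasFDerivAt ΩN.ω (fderiv ℝ ΩN.ω x) x :=
    (ΩN.smooth.differentiable (by simp) _).hasFDerivAt
  have hΓNd : HasFDerivAt CN.Γ (fderiv ℝ CN.Γ x) x :=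
    (CN.smooth.differentiable (by simp) _).hasFDerivAt
  have hDφZ := hTd.clm_apply (hasFDerivAt_const Z x)
  have hDφu := hTd.clm_apply (hasFDerivAt_const u x)
  have hD2uZ := (hT2d.clm_apply (hasFDerivAt_const u x)).clm_apply (hasFDerivAt_const Z x)
  have hΓφ : HasFDerivAt (fun y => C.Γ (φ y)) ((fderiv ℝ C.Γ (φ x)).comp (fderiv ℝ φ x)) x :=
    HasFDerivAt.comp (g := C.Γ) x hΓd hφd
  have hΓt := (hΓφ.clm_apply hDφu).clm_apply hDφZ
  have hGd := hD2uZ.add hΓt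
  have hΩφ : HasFDerivAt (fun y => Ω.ω (φ y)) ((fderiv ℝ Ω.ω (φ x)).comp (fderiv ℝ φ x)) x :=
    HasFDerivAt.comp (g := Ω.ω) x hΩd hφd
  have hSB := (hΩφ.clm_apply hGd).clm_apply hDφZ
  have hSA := ((hΩNd.clm_apply ((hΓNd.clm_apply (hasFDerivAt_const u x)).clm_apply
      (hasFDerivAt_const Z x))).clm_apply (hasFDerivAt_const Z x))
  have hfun : (fun y => Ω.ω (φ y)
        (fderiv ℝ (fderiv ℝ φ) y u Z + C.Γ (φ y) (fderiv ℝ φ y u) (fderiv ℝ φ y Z))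
        (fderiv ℝ φ y Z))
      = fun y => ΩN.ω y (CN.Γ y u Z) Z := by
    funext y
    rw [hGauss y u Z]
    simp [hΩN, hperp]
  simp only [Pi.add_apply] at hSB
  rw [hfun] at hSB
  have hE := hSB.unique hSA
  have h := DFunLike.congr_fun hE a
  simp only [ContinuousLinearMap.add_apply, ContinuousLinearMap.coe_comp',
    Function.comp_apply, ContinuousLinearMap.flip_apply, ContinuousLinearMap.comp_zero,
    ContinuousLinearMap.zero_apply, ContinuousLinearMap.zero_comp, zero_add, add_zero,
    ContinuousLinearMap.map_zero, map_add, C.parallel, CN.parallel] at h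
  linarith [h]

/-- Let `φ : N → M` be a smooth symplectic immersion into `(M, Ω)` with
symplectic connection `C`, and let `CN` be the induced symplectic connection on
`(N, φ^*(Ω))`, with second fundamental form `Π` (characterized by the Gauss decomposition
`∇_u Tφ(v) = Tφ(∇̄_u v) + Π(u,v)` with `Π` taking values in the symplectic orthogonal
complement of `Tφ(TN)`).  Then for `x ∈ N`, a symplectic plane `L` spanned by `X, Y`, and
`Z ∈ L`:
`scurv^{M,∇}(Tφ Z) = scurv^{N,∇̄}(Z) + 2Ω(Π(X,Z), Π(Y,Z))/φ^*(Ω)(X,Y)`. -/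
theorem statement_12 {E F : Type*}
    [NormedAddCommGroup E] [NormedSpace ℝ E] [FiniteDimensional ℝ E]
    [NormedAddCommGroup F] [NormedSpace ℝ F] [FiniteDimensional ℝ F]
    (Ω : SympForm E) (C : SympConnection Ω)
    (φ : F → E) (hφ : ContDiff ℝ (⊤ : ℕ∞) φ)
    (ΩN : SympForm F)
    (hΩN : ∀ x u v, ΩN.ω x u v = Ω.ω (φ x) (fderiv ℝ φ x u) (fderiv ℝ φ x v))
    (CN : SympConnection ΩN)
    (sff : F → F → F → E)
    (hdecomp : ∀ x u v,
      fderiv ℝ (fun y => fderiv ℝ φ y v) x u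
        + C.Γ (φ x) (fderiv ℝ φ x u) (fderiv ℝ φ x v)
      = fderiv ℝ φ x (CN.Γ x u v) + sff x u v)
    (hperp : ∀ x u v w, Ω.ω (φ x) (sff x u v) (fderiv ℝ φ x w) = 0) :
    ∀ x X Y, ΩN.ω x X Y ≠ 0 → ∀ Z ∈ Submodule.span ℝ ({X, Y} : Set F),
      scurv C (φ x) (fderiv ℝ φ x X) (fderiv ℝ φ x Y) (fderiv ℝ φ x Z)
        = scurv CN x X Y Z
          + 2 * Ω.ω (φ x) (sff x X Z) (sff x Y Z) / ΩN.ω x X Y := by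

  intro x X Y hXY Z hZ
  have one_le : ((1:ℕ∞) : WithTop ℕ∞) ≤ ((⊤:ℕ∞) : WithTop ℕ∞) := by norm_cast
  have hT : ContDiff ℝ (⊤ : ℕ∞) (fderiv ℝ φ) := hφ.fderiv_right (by exact_mod_cast le_top)
  have h2 : ∀ (y v : F), fderiv ℝ (fun z => fderiv ℝ φ z v) y
      = (fderiv ℝ (fderiv ℝ φ) y).flip v := by
    intro y v
    have h := ((hT.differentiable (by simp) y).hasFDerivAt.clm_apply
      (hasFDerivAt_const v y)).fderiv
    rw [h]; ext w; simp
  have hGauss : ∀ (y u v : F), fderiv ℝ (fderiv ℝ φ) y u v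
        + C.Γ (φ y) (fderiv ℝ φ y u) (fderiv ℝ φ y v)
      = fderiv ℝ φ y (CN.Γ y u v) + sff y u v := by
    intro y u v
    have hd := hdecomp y u v
    rw [h2 y v] at hd
    simpa using hd
  have key := fun a u => key_lemma Ω C φ hφ ΩN hΩN CN sff hperp x Z hGauss a u
  have hsymφ : IsSymmSndFDerivAt ℝ φ x := hφ.contDiffAt.isSymmSndFDerivAt (by simp; exact WithTop.coe_le_coe.mpr le_top)
  have hsymT : IsSymmSndFDerivAt ℝ (fderiv ℝ φ) x :=
    hT.contDiffAt.isSymmSndFDerivAt (by simp; exact WithTop.coe_le_coe.mpr le_top)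
  have hG1 : ∀ a : F, fderiv ℝ (fderiv ℝ φ) x a Z
      = fderiv ℝ φ x (CN.Γ x a Z) + sff x a Z
        - C.Γ (φ x) (fderiv ℝ φ x a) (fderiv ℝ φ x Z) := by
    intro a; rw [eq_sub_iff_add_eq]; exact hGauss x a Z
  have e1 := key X Y
  have e2 := key Y X
  rw [hsymT.eq Y X, hsymφ.eq Y X] at e2
  rw [hG1 X, hG1 Y] at e1 e2
  simp only [map_add, map_sub, ContinuousLinearMap.add_apply, ContinuousLinearMap.sub_apply,
    hΩN] at e1 e2
  have hR : Rlow C (φ x) (fderiv ℝ φ x X) (fderiv ℝ φ x Y) (fderiv ℝ φ x Z) (fderiv ℝ φ x Z)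
      = Rlow CN x X Y Z Z + 2 * Ω.ω (φ x) (sff x X Z) (sff x Y Z) := by
    simp only [Rlow, curvOp, ContinuousLinearMap.sub_apply, ContinuousLinearMap.add_apply,
      ContinuousLinearMap.coe_comp', Function.comp_apply, map_add, map_sub, hΩN]
    linarith [e1, e2, hperp x X Z Z, hperp x Y Z Z, hperp x X Z (CN.Γ x Y Z),
      hperp x Y Z (CN.Γ x X Z), hperp x X Z (CN.Γ x X Z), hperp x Y Z (CN.Γ x Y Z),
      Ω.skew (φ x) (fderiv ℝ φ x (CN.Γ x Y Z)) (sff x X Z),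
      Ω.skew (φ x) (fderiv ℝ φ x (CN.Γ x X Z)) (sff x Y Z),
      Ω.skew (φ x) (sff x X Z) (sff x Y Z),
      Ω.skew (φ x) (fderiv ℝ φ x Z) (sff x X Z),
      Ω.skew (φ x) (fderiv ℝ φ x Z) (sff x Y Z)]
  simp only [scurv]
  rw [hR, ← hΩN x X Y, add_div]
end

section
/- The Ricci curvature of the symplectic connection induced on a symplectic submanifold φ: N → V of a symplectic affine space (V, ∇, Ω) equals −smc_{ij}, where smc_{ij} = ω^{ab}Ω_{AB}Π_{ia}{}^AΠ_{jb}{}^B, Π is the second fundamental form of φ with respect to the flat connection ∇ and the induced connection, and ω^{ij} is the bivector inverse to φ^*(Ω)_{ij}. -/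
variable {E : Type*} [NormedAddCommGroup E] [NormedSpace ℝ E]

lemma trace_eq_of_pairing {F : Type*} [NormedAddCommGroup F] [NormedSpace ℝ F]
    [FiniteDimensional ℝ F]
    (b : F →ₗ[ℝ] F →ₗ[ℝ] ℝ) (hb : ∀ u, (∀ v, b u v = 0) → u = 0)
    (P Q : F →ₗ[ℝ] F) (h : ∀ w z, b (P w) z = b w (Q z)) :
    LinearMap.trace ℝ F P = LinearMap.trace ℝ F Q := by
  have hinj : Function.Injective b := by
    rw [← LinearMap.ker_eq_bot, LinearMap.ker_eq_bot']
    intro m hm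
    exact hb m fun v => by rw [hm]; rfl
  have hsurj : Function.Surjective b :=
    (LinearMap.injective_iff_surjective_of_finrank_eq_finrank
      (Subspace.dual_finrank_eq (V := F)).symm).mp hinj
  let e : F ≃ₗ[ℝ] Module.Dual ℝ F := LinearEquiv.ofBijective b ⟨hinj, hsurj⟩
  have hP : P = e.symm.conj (Module.Dual.transpose (R := ℝ) Q) := by
    ext w
    apply hinj
    have h1 : e (P w) = Module.Dual.transpose (R := ℝ) Q (e w) := by
      ext z
      exact h w z
    have h2 : b (P w) = e (P w) := rfl
    rw [h2, h1]
    simp only [LinearEquiv.conj_apply, LinearMap.coe_comp, Function.comp_apply,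
      LinearEquiv.coe_coe]
    exact (e.apply_symm_apply _).symm
  rw [hP, LinearMap.trace_conj', LinearMap.trace_transpose']

lemma trace_eq_neg_of_pairing {F : Type*} [NormedAddCommGroup F] [NormedSpace ℝ F]
    [FiniteDimensional ℝ F]
    (b : F →ₗ[ℝ] F →ₗ[ℝ] ℝ) (hb : ∀ u, (∀ v, b u v = 0) → u = 0)
    (hskew : ∀ w z, b w z = - b z w)
    (P Q : F →ₗ[ℝ] F) (G : F →ₗ[ℝ] F →ₗ[ℝ] ℝ) (hGsym : ∀ w z, G w z = G z w)
    (h : ∀ w z, b (P w) z + b w (Q z) = G w z) :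
    LinearMap.trace ℝ F P = - LinearMap.trace ℝ F Q := by
  have hinj : Function.Injective b := by
    rw [← LinearMap.ker_eq_bot, LinearMap.ker_eq_bot']
    intro m hm
    exact hb m fun v => by rw [hm]; rfl
  have hsurj : Function.Surjective b :=
    (LinearMap.injective_iff_surjective_of_finrank_eq_finrank
      (Subspace.dual_finrank_eq (V := F)).symm).mp hinj
  let e : F ≃ₗ[ℝ] Module.Dual ℝ F := LinearEquiv.ofBijective b ⟨hinj, hsurj⟩
  let K : F →ₗ[ℝ] F := (e.symm : Module.Dual ℝ F →ₗ[ℝ] F).comp G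
  have hK : ∀ w z, b (K w) z = G w z := by
    intro w z
    have h2 : b (K w) = e (K w) := rfl
    have h3 : e (K w) = G w := by
      show e (e.symm (G w)) = G w
      exact e.apply_symm_apply _
    rw [h2, h3]
  have hKtr : LinearMap.trace ℝ F K = 0 := by
    have := trace_eq_of_pairing b hb K (-K) (fun w z => by
      rw [hK, hGsym, ← hK z w, hskew (K z) w]
      simp)
    simp only [map_neg] at this
    linarith
  have htr : LinearMap.trace ℝ F (P - K) = LinearMap.trace ℝ F (-Q) := by
    refine trace_eq_of_pairing b hb _ _ (fun w z => ?_)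
    have h1 := h w z
    have h2 := hK w z
    have : b (P w - K w) z = b (P w) z - b (K w) z := by simp
    rw [LinearMap.sub_apply, this]
    have h4 : (b w) ((-Q) z) = - (b w) (Q z) := by simp
    rw [h4]
    linarith
  simp only [map_sub, map_neg, hKtr, sub_zero] at htr
  exact htr
set_option maxHeartbeats 4000000 in
/-- Let `(E, ∇, Ω)` be a symplectic affine space (a vector space with a flat
affine connection `C` and a parallel symplectic form `Ω`), and let `φ : N → E` be a
symplectic submanifold (symplectic immersion), with induced symplectic connection `CN` and
second fundamental form `sff`.  Then the Ricci curvature of `CN` equals `-smc`, where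
`smc(u,v) = ω^{ab}Ω_{AB}Π_{ua}{}^AΠ_{vb}{}^B` is encoded as the trace of any linear
packaging `D` with `ω(D a, b) = Ω(Π(u,a), Π(v,b))`. -/
theorem statement_14 {E F : Type*}
    [NormedAddCommGroup E] [NormedSpace ℝ E] [FiniteDimensional ℝ E]
    [NormedAddCommGroup F] [NormedSpace ℝ F] [FiniteDimensional ℝ F]
    (Ω : SympForm E) (C : SympConnection Ω)
    (hflat : ∀ x u v w, curvOp C x u v w = 0)
    (φ : F → E) (hφ : ContDiff ℝ (⊤ : ℕ∞) φ)
    (ΩN : SympForm F)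
    (hΩN : ∀ x u v, ΩN.ω x u v = Ω.ω (φ x) (fderiv ℝ φ x u) (fderiv ℝ φ x v))
    (CN : SympConnection ΩN)
    (sff : F → F → F → E)
    (hdecomp : ∀ x u v,
      fderiv ℝ (fun y => fderiv ℝ φ y v) x u
        + C.Γ (φ x) (fderiv ℝ φ x u) (fderiv ℝ φ x v)
      = fderiv ℝ φ x (CN.Γ x u v) + sff x u v)
    (hperp : ∀ x u v w, Ω.ω (φ x) (sff x u v) (fderiv ℝ φ x w) = 0) :
    ∀ x u v, ∀ D : F →ₗ[ℝ] F,
      (∀ a b, ΩN.ω x (D a) b = Ω.ω (φ x) (sff x u a) (sff x v b)) →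
      ricci CN x u v = - LinearMap.trace ℝ F D := by
  intro x u v D hD
  have hφd : Differentiable ℝ φ := hφ.differentiable (by simp)
  have hTc : ContDiff ℝ (⊤ : ℕ∞) (fderiv ℝ φ) := hφ.fderiv_right (by exact_mod_cast le_top)
  have hTdiff : Differentiable ℝ (fderiv ℝ φ) := hTc.differentiable (by simp)
  have hSc : ContDiff ℝ (⊤ : ℕ∞) (fderiv ℝ (fderiv ℝ φ)) :=
    hTc.fderiv_right (by exact_mod_cast le_top)
  have hSdiff : Differentiable ℝ (fderiv ℝ (fderiv ℝ φ)) :=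
    hSc.differentiable (by simp)
  have hΓd : Differentiable ℝ C.Γ := C.smooth.differentiable (by simp)
  have hΩd : Differentiable ℝ Ω.ω := Ω.smooth.differentiable (by simp)
  have hNd : Differentiable ℝ CN.Γ := CN.smooth.differentiable (by simp)
  have hsymT : ∀ a b : F, fderiv ℝ (fderiv ℝ φ) x a b = fderiv ℝ (fderiv ℝ φ) x b a :=
    second_derivative_symmetric (fun y => (hφd y).hasFDerivAt) ((hTdiff x).hasFDerivAt)
  have hsymS : ∀ a b : F, fderiv ℝ (fderiv ℝ (fderiv ℝ φ)) x a b
      = fderiv ℝ (fderiv ℝ (fderiv ℝ φ)) x b a :=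
    second_derivative_symmetric (fun y => (hTdiff y).hasFDerivAt) ((hSdiff x).hasFDerivAt)
  have hdec : ∀ y a b, fderiv ℝ (fderiv ℝ φ) y a b
      + C.Γ (φ y) (fderiv ℝ φ y a) (fderiv ℝ φ y b)
      = fderiv ℝ φ y (CN.Γ y a b) + sff y a b := by
    intro y a b
    have h0 : fderiv ℝ (fun y' => fderiv ℝ φ y' b) y
        = (fderiv ℝ φ y).comp (0 : F →L[ℝ] F) + (fderiv ℝ (fderiv ℝ φ) y).flip b :=
      ((hTdiff y).hasFDerivAt.clm_apply (hasFDerivAt_const b y)).fderiv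
    have h1 := hdecomp y a b
    rw [h0] at h1
    simpa using h1
  -- the derivative of the perpendicularity relation
  have hE : ∀ b c d w : F,
      Ω.ω (φ x) (sff x b c) (fderiv ℝ (fderiv ℝ φ) x w d)
      + Ω.ω (φ x) (fderiv ℝ (fderiv ℝ (fderiv ℝ φ)) x w b c) (fderiv ℝ φ x d)
      + Ω.ω (φ x) (C.Γ (φ x) (fderiv ℝ φ x b) (fderiv ℝ (fderiv ℝ φ) x w c)) (fderiv ℝ φ x d)
      + Ω.ω (φ x) (C.Γ (φ x) (fderiv ℝ (fderiv ℝ φ) x w b) (fderiv ℝ φ x c)) (fderiv ℝ φ x d)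
      + Ω.ω (φ x) (fderiv ℝ C.Γ (φ x) (fderiv ℝ φ x w) (fderiv ℝ φ x b) (fderiv ℝ φ x c))
          (fderiv ℝ φ x d)
      - Ω.ω (φ x) (fderiv ℝ φ x (fderiv ℝ CN.Γ x w b c)) (fderiv ℝ φ x d)
      - Ω.ω (φ x) (fderiv ℝ (fderiv ℝ φ) x w (CN.Γ x b c)) (fderiv ℝ φ x d)
      + fderiv ℝ Ω.ω (φ x) (fderiv ℝ φ x w) (sff x b c) (fderiv ℝ φ x d) = 0 := by
    intro b c d w
    have hTdx : HasFDerivAt (fderiv ℝ φ) (fderiv ℝ (fderiv ℝ φ) x) x := (hTdiff x).hasFDerivAt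
    have hSdx := (hSdiff x).hasFDerivAt
    have hT_b := hTdx.clm_apply (hasFDerivAt_const b x)
    have hT_c := hTdx.clm_apply (hasFDerivAt_const c x)
    have hT_d := hTdx.clm_apply (hasFDerivAt_const d x)
    have hS_bc := (hSdx.clm_apply (hasFDerivAt_const b x)).clm_apply (hasFDerivAt_const c x)
    have hΓφx := (HasFDerivAt.comp (g := C.Γ) x (hΓd (φ x)).hasFDerivAt (hφd x).hasFDerivAt)
    have hB := (hΓφx.clm_apply hT_b).clm_apply hT_c
    have hN_bc := ((hNd x).hasFDerivAt.clm_apply (hasFDerivAt_const b x)).clm_apply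
      (hasFDerivAt_const c x)
    have hTN := hTdx.clm_apply hN_bc
    have heq : (fun y => sff y b c) = fun y =>
        (fderiv ℝ (fderiv ℝ φ) y b c
          + C.Γ (φ y) (fderiv ℝ φ y b) (fderiv ℝ φ y c))
          - fderiv ℝ φ y (CN.Γ y b c) := by
      funext y
      rw [hdec y b c]
      abel
    have hsffbc := heq ▸ (show HasFDerivAt (fun y =>
        (fderiv ℝ (fderiv ℝ φ) y b c + C.Γ (φ y) (fderiv ℝ φ y b) (fderiv ℝ φ y c))
          - fderiv ℝ φ y (CN.Γ y b c)) _ x from (hS_bc.add hB).sub hTN)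
    have hΩφx := HasFDerivAt.comp (g := Ω.ω) x (hΩd (φ x)).hasFDerivAt (hφd x).hasFDerivAt
    have hfull := (hΩφx.clm_apply hsffbc).clm_apply hT_d
    have h0 : (fun y => Ω.ω (φ y) (sff y b c) (fderiv ℝ φ y d)) = fun _ => (0:ℝ) :=
      funext fun y => hperp y b c d
    simp only [Function.comp_def] at hfull
    rw [h0] at hfull
    have hzero := hfull.unique (hasFDerivAt_const 0 x)
    have hw := congrArg (fun (L : F →L[ℝ] ℝ) => L w) hzero
    simp [ContinuousLinearMap.add_apply, ContinuousLinearMap.comp_apply,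
      ContinuousLinearMap.flip_apply, ContinuousLinearMap.sub_apply] at hw
    linarith [hw]
  -- pointwise decomposition of the second derivative
  have hPv : ∀ a b : F, fderiv ℝ (fderiv ℝ φ) x a b
      = fderiv ℝ φ x (CN.Γ x a b) + sff x a b
        - C.Γ (φ x) (fderiv ℝ φ x a) (fderiv ℝ φ x b) := by
    intro a b
    rw [← hdec x a b]
    abel
  -- symmetry of the second fundamental form
  have ssym : ∀ a b : F, sff x a b = sff x b a := by
    intro a b
    have e1 : sff x a b = fderiv ℝ (fderiv ℝ φ) x a b
        + C.Γ (φ x) (fderiv ℝ φ x a) (fderiv ℝ φ x b) - fderiv ℝ φ x (CN.Γ x a b) := by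
      rw [hdec x a b]; abel
    have e2 : sff x b a = fderiv ℝ (fderiv ℝ φ) x b a
        + C.Γ (φ x) (fderiv ℝ φ x b) (fderiv ℝ φ x a) - fderiv ℝ φ x (CN.Γ x b a) := by
      rw [hdec x b a]; abel
    rw [e1, e2, hsymT a b, C.symm (φ x) (fderiv ℝ φ x a) (fderiv ℝ φ x b), CN.symm x a b]
  -- flatness, as a pointwise vector identity
  have hflatV : ∀ e1 e2 e3 : E,
      fderiv ℝ C.Γ (φ x) e1 e2 e3 - fderiv ℝ C.Γ (φ x) e2 e1 e3
      + C.Γ (φ x) e1 (C.Γ (φ x) e2 e3) - C.Γ (φ x) e2 (C.Γ (φ x) e1 e3) = 0 := by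
    intro e1 e2 e3
    have := hflat (φ x) e1 e2 e3
    simpa [curvOp, ContinuousLinearMap.sub_apply, ContinuousLinearMap.add_apply,
      ContinuousLinearMap.comp_apply] using this
  -- the Gauss equation, scalar form
  have hGauss : ∀ w z : F,
      ΩN.ω x (fderiv ℝ CN.Γ x w u v - fderiv ℝ CN.Γ x u w v
        + CN.Γ x w (CN.Γ x u v) - CN.Γ x u (CN.Γ x w v)) z
      = Ω.ω (φ x) (sff x u v) (sff x w z) - Ω.ω (φ x) (sff x w v) (sff x u z) := by
    intro w z
    have E1 := hE u v z w
    have E2 := hE w v z u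
    have A1 : Ω.ω (φ x) (sff x u v) (fderiv ℝ (fderiv ℝ φ) x w z)
        = Ω.ω (φ x) (sff x u v) (sff x w z)
          - Ω.ω (φ x) (sff x u v) (C.Γ (φ x) (fderiv ℝ φ x w) (fderiv ℝ φ x z)) := by
      rw [hPv w z]; simp [hperp]
    have A2 : Ω.ω (φ x) (sff x w v) (fderiv ℝ (fderiv ℝ φ) x u z)
        = Ω.ω (φ x) (sff x w v) (sff x u z)
          - Ω.ω (φ x) (sff x w v) (C.Γ (φ x) (fderiv ℝ φ x u) (fderiv ℝ φ x z)) := by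
      rw [hPv u z]; simp [hperp]
    have A3 : Ω.ω (φ x) (C.Γ (φ x) (fderiv ℝ φ x u) (fderiv ℝ (fderiv ℝ φ) x w v))
          (fderiv ℝ φ x z)
        = Ω.ω (φ x) (C.Γ (φ x) (fderiv ℝ φ x u) (fderiv ℝ φ x (CN.Γ x w v))) (fderiv ℝ φ x z)
          + Ω.ω (φ x) (C.Γ (φ x) (fderiv ℝ φ x u) (sff x w v)) (fderiv ℝ φ x z)
          - Ω.ω (φ x) (C.Γ (φ x) (fderiv ℝ φ x u)
              (C.Γ (φ x) (fderiv ℝ φ x w) (fderiv ℝ φ x v))) (fderiv ℝ φ x z) := by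
      rw [hPv w v]; simp
    have A4 : Ω.ω (φ x) (C.Γ (φ x) (fderiv ℝ φ x w) (fderiv ℝ (fderiv ℝ φ) x u v))
          (fderiv ℝ φ x z)
        = Ω.ω (φ x) (C.Γ (φ x) (fderiv ℝ φ x w) (fderiv ℝ φ x (CN.Γ x u v))) (fderiv ℝ φ x z)
          + Ω.ω (φ x) (C.Γ (φ x) (fderiv ℝ φ x w) (sff x u v)) (fderiv ℝ φ x z)
          - Ω.ω (φ x) (C.Γ (φ x) (fderiv ℝ φ x w)
              (C.Γ (φ x) (fderiv ℝ φ x u) (fderiv ℝ φ x v))) (fderiv ℝ φ x z) := by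
      rw [hPv u v]; simp
    have A5 : Ω.ω (φ x) (fderiv ℝ (fderiv ℝ φ) x w (CN.Γ x u v)) (fderiv ℝ φ x z)
        = Ω.ω (φ x) (fderiv ℝ φ x (CN.Γ x w (CN.Γ x u v))) (fderiv ℝ φ x z)
          - Ω.ω (φ x) (C.Γ (φ x) (fderiv ℝ φ x w) (fderiv ℝ φ x (CN.Γ x u v)))
              (fderiv ℝ φ x z) := by
      rw [hPv w (CN.Γ x u v)]; simp [hperp]
    have A6 : Ω.ω (φ x) (fderiv ℝ (fderiv ℝ φ) x u (CN.Γ x w v)) (fderiv ℝ φ x z)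
        = Ω.ω (φ x) (fderiv ℝ φ x (CN.Γ x u (CN.Γ x w v))) (fderiv ℝ φ x z)
          - Ω.ω (φ x) (C.Γ (φ x) (fderiv ℝ φ x u) (fderiv ℝ φ x (CN.Γ x w v)))
              (fderiv ℝ φ x z) := by
      rw [hPv u (CN.Γ x w v)]; simp [hperp]
    have A7 : Ω.ω (φ x) (fderiv ℝ (fderiv ℝ (fderiv ℝ φ)) x u w v) (fderiv ℝ φ x z)
        = Ω.ω (φ x) (fderiv ℝ (fderiv ℝ (fderiv ℝ φ)) x w u v) (fderiv ℝ φ x z) :=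
      congrArg (fun (L : F →L[ℝ] E) => Ω.ω (φ x) (L v) (fderiv ℝ φ x z)) (hsymS u w)
    have A8 : Ω.ω (φ x) (C.Γ (φ x) (fderiv ℝ (fderiv ℝ φ) x u w) (fderiv ℝ φ x v))
          (fderiv ℝ φ x z)
        = Ω.ω (φ x) (C.Γ (φ x) (fderiv ℝ (fderiv ℝ φ) x w u) (fderiv ℝ φ x v))
          (fderiv ℝ φ x z) :=
      congrArg (fun (e : E) => Ω.ω (φ x) (C.Γ (φ x) e (fderiv ℝ φ x v)) (fderiv ℝ φ x z))
        (hsymT u w)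
    have A9a := C.parallel (φ x) (fderiv ℝ φ x w) (sff x u v) (fderiv ℝ φ x z)
    have A9b := C.parallel (φ x) (fderiv ℝ φ x u) (sff x w v) (fderiv ℝ φ x z)
    have A10 : Ω.ω (φ x) (fderiv ℝ C.Γ (φ x) (fderiv ℝ φ x w) (fderiv ℝ φ x u)
            (fderiv ℝ φ x v)) (fderiv ℝ φ x z)
        - Ω.ω (φ x) (fderiv ℝ C.Γ (φ x) (fderiv ℝ φ x u) (fderiv ℝ φ x w)
            (fderiv ℝ φ x v)) (fderiv ℝ φ x z)
        + Ω.ω (φ x) (C.Γ (φ x) (fderiv ℝ φ x w)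
            (C.Γ (φ x) (fderiv ℝ φ x u) (fderiv ℝ φ x v))) (fderiv ℝ φ x z)
        - Ω.ω (φ x) (C.Γ (φ x) (fderiv ℝ φ x u)
            (C.Γ (φ x) (fderiv ℝ φ x w) (fderiv ℝ φ x v))) (fderiv ℝ φ x z) = 0 := by
      have := congrArg (fun (e : E) => Ω.ω (φ x) e (fderiv ℝ φ x z))
        (hflatV (fderiv ℝ φ x w) (fderiv ℝ φ x u) (fderiv ℝ φ x v))
      simpa using this
    rw [hΩN]
    simp only [map_add, map_sub, ContinuousLinearMap.add_apply, ContinuousLinearMap.sub_apply]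
    linarith [E1, E2, A1, A2, A3, A4, A5, A6, A7, A8, A9a, A9b, A10]
  -- linear-algebra packaging
  set L : F →ₗ[ℝ] F :=
    ((((fderiv ℝ CN.Γ x).flip u).flip v - ((fderiv ℝ CN.Γ x) u).flip v
      + (CN.Γ x).flip (CN.Γ x u v) - (CN.Γ x u).comp ((CN.Γ x).flip v)).toLinearMap) with hLdef
  have hric : ricci CN x u v = LinearMap.trace ℝ F L := rfl
  have hLw : ∀ w : F, L w = fderiv ℝ CN.Γ x w u v - fderiv ℝ CN.Γ x u w v
      + CN.Γ x w (CN.Γ x u v) - CN.Γ x u (CN.Γ x w v) := by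
    intro w
    simp [hLdef, ContinuousLinearMap.sub_apply, ContinuousLinearMap.add_apply,
      ContinuousLinearMap.flip_apply, ContinuousLinearMap.comp_apply]
  -- bilinear forms
  have slin : ∀ a b : F, sff x a b = fderiv ℝ (fderiv ℝ φ) x a b
      + C.Γ (φ x) (fderiv ℝ φ x a) (fderiv ℝ φ x b) - fderiv ℝ φ x (CN.Γ x a b) := by
    intro a b; rw [hdec x a b]; abel
  set G : F →ₗ[ℝ] F →ₗ[ℝ] ℝ := LinearMap.mk₂ ℝ
      (fun w z => Ω.ω (φ x) (sff x u v) (sff x w z))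
      (fun w w' z => by beta_reduce; rw [slin (w + w') z, slin w z, slin w' z]; simp; ring)
      (fun r w z => by beta_reduce; rw [slin (r • w) z, slin w z]; simp; ring)
      (fun w z z' => by beta_reduce; rw [slin w (z + z'), slin w z, slin w z']; simp; ring)
      (fun r w z => by beta_reduce; rw [slin w (r • z), slin w z]; simp; ring)
    with hGdef
  set bN : F →ₗ[ℝ] F →ₗ[ℝ] ℝ := LinearMap.mk₂ ℝ (fun w z => ΩN.ω x w z)
      (fun w w' z => by simp) (fun r w z => by simp)
      (fun w z z' => by simp) (fun r w z => by simp) with hbdef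
  have hbnd : ∀ m, (∀ z, bN m z = 0) → m = 0 := by
    intro m hm
    exact ΩN.nondeg x m (fun z => hm z)
  have hbskew : ∀ w z, bN w z = - bN z w := fun w z => ΩN.skew x w z
  have hGsym : ∀ w z, G w z = G z w := by
    intro w z
    simp only [hGdef, LinearMap.mk₂_apply]
    rw [ssym w z]
  have hrel : ∀ w z, bN (L w) z + bN w (D z) = G w z := by
    intro w z
    simp only [hGdef, hbdef, LinearMap.mk₂_apply]
    have h1 : ΩN.ω x (L w) z = Ω.ω (φ x) (sff x u v) (sff x w z)
        - Ω.ω (φ x) (sff x w v) (sff x u z) := by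
      rw [hLw w]; exact hGauss w z
    have h2 : ΩN.ω x w (D z) = Ω.ω (φ x) (sff x w v) (sff x u z) := by
      rw [ΩN.skew x w (D z), hD z w, Ω.skew (φ x) (sff x u z) (sff x v w), ssym v w]
      ring
    rw [h1, h2]
    ring
  have := trace_eq_neg_of_pairing bN hbnd hbskew L D G hGsym hrel
  rw [hric, this]
end

section
/- Let (M, Ω) be a symplectic manifold and let ∇ be a symplectic connection with nonpositive symplectic sectional curvature. Let γ: I → M be a maximal geodesic of ∇, with I ⊂ ℝ an open interval, and let J(t) be a Jacobi field along γ. Then exactly one of the following holds: (1) the function t ↦ Ω(J(t), γ̇(t)) has at most one zero in I (in particular J vanishes at most once on γ(I)); (2) Ω(J(t), γ̇(t)) is identically zero on I. In particular, if p, q ∈ M are conjugate along γ, then any Jacobi field along γ vanishing at p and q is coisotropic. -/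
variable {E : Type*} [NormedAddCommGroup E] [NormedSpace ℝ E]

section AuxStatement15

open Set

variable {E : Type*} [NormedAddCommGroup E] [NormedSpace ℝ E]

private lemma etop1 : ((⊤ : ℕ∞) : WithTop ℕ∞) ≠ 0 := by simp
private lemma etop2 : ((⊤ : ℕ∞) : WithTop ℕ∞) + 1 ≤ ((⊤ : ℕ∞) : WithTop ℕ∞) := by
  exact_mod_cast le_top

/-- Linearity of the lowered curvature in its second (field) slot. -/
lemma Rlow_add_smul {Ω : SympForm E} (C : SympConnection Ω) (x u v w z z' : E) (c : ℝ) :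
    Rlow C x u (v + c • w) z z' = Rlow C x u v z z' + c * Rlow C x u w z z' := by
  simp only [Rlow, curvOp, ContinuousLinearMap.sub_apply, ContinuousLinearMap.add_apply,
    ContinuousLinearMap.comp_apply, map_add, map_sub, map_smul, ContinuousLinearMap.smul_apply,
    ContinuousLinearMap.coe_smul', Pi.smul_apply, smul_eq_mul]
  ring

/-- If the plane spanned by `X, Y` is degenerate while `Ω x X ≠ 0`, then
`Ω(R(X,Y)X, X) = 0`.  This follows from nonpositivity of the symplectic sectional
curvature by perturbing `Y`. -/
lemma rlow_vanish {Ω : SympForm E} {C : SympConnection Ω}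
    (hnonpos : ∀ x X Y, Ω.ω x X Y ≠ 0 →
      ∀ Z ∈ Submodule.span ℝ ({X, Y} : Set E), scurv C x X Y Z ≤ 0)
    (x X W Y : E) (hW : Ω.ω x X W ≠ 0) (hY : Ω.ω x X Y = 0) :
    Rlow C x X Y X X = 0 := by
  by_contra ha
  set a := Rlow C x X Y X X with ha'
  set b := Rlow C x X W X X with hb'
  set d := Ω.ω x X W with hd'
  set t : ℝ := 1 / (1 + |b / d|) with ht'
  have htpos : 0 < t := by positivity
  set ε : ℝ := t * (a / d) with hε'
  have hεne : ε ≠ 0 := mul_ne_zero htpos.ne' (div_ne_zero ha hW)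
  have hΩ : Ω.ω x X (Y + ε • W) = ε * d := by
    rw [map_add, map_smul, hY]
    simp [smul_eq_mul, hd']
  have hΩne : Ω.ω x X (Y + ε • W) ≠ 0 := by rw [hΩ]; exact mul_ne_zero hεne hW
  have hsc := hnonpos x X (Y + ε • W) hΩne X
    (Submodule.subset_span (Set.mem_insert _ _))
  rw [scurv, Rlow_add_smul, hΩ] at hsc
  rw [← ha', ← hb'] at hsc
  -- hsc : (a + ε * b) / (ε * d) ≤ 0
  have h2 : (a + ε * b) * (ε * d) ≤ 0 := by
    have h3 : ((a + ε * b) / (ε * d)) * (ε * d) ^ 2 ≤ 0 :=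
      mul_nonpos_iff.mpr (Or.inr ⟨hsc, sq_nonneg _⟩)
    have h4 : ((a + ε * b) / (ε * d)) * (ε * d) ^ 2 = (a + ε * b) * (ε * d) := by
      field_simp
    linarith [h4 ▸ h3]
  have e1 : ε * d = t * a := by
    rw [hε']; field_simp
  have e2 : a + ε * b = a * (1 + t * (b / d)) := by
    rw [hε']; field_simp
  have h3 : 0 < 1 + t * (b / d) := by
    have h4 : t * |b / d| < 1 := by
      rw [ht', div_mul_eq_mul_div, one_mul, div_lt_one (by positivity)]
      linarith [abs_nonneg (b / d)]
    have h5 : -(t * |b / d|) ≤ t * (b / d) := by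
      have h6 : -|b / d| ≤ b / d := neg_abs_le _
      nlinarith [htpos.le]
    linarith
  rw [e1, e2] at h2
  have h6 : 0 < t * (a * a) * (1 + t * (b / d)) :=
    mul_pos (mul_pos htpos (mul_self_pos.mpr ha)) h3
  have h7 : a * (1 + t * (b / d)) * (t * a) = t * (a * a) * (1 + t * (b / d)) := by ring
  linarith [h7 ▸ h2]

/-- Proportionality: `Ω(R(X,Y)X,X) · Ω(X,W) = Ω(R(X,W)X,X) · Ω(X,Y)` whenever
`Ω(X,W) ≠ 0`. -/
lemma rlow_prop {Ω : SympForm E} {C : SympConnection Ω}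
    (hnonpos : ∀ x X Y, Ω.ω x X Y ≠ 0 →
      ∀ Z ∈ Submodule.span ℝ ({X, Y} : Set E), scurv C x X Y Z ≤ 0)
    (x X W Y : E) (hW : Ω.ω x X W ≠ 0) :
    Rlow C x X Y X X * Ω.ω x X W = Rlow C x X W X X * Ω.ω x X Y := by
  have h0 : Ω.ω x X (Y + (-(Ω.ω x X Y / Ω.ω x X W)) • W) = 0 := by
    rw [map_add, map_smul]
    simp only [smul_eq_mul]
    field_simp
    ring
  have h1 := rlow_vanish hnonpos x X W _ hW h0
  rw [Rlow_add_smul] at h1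
  have h2 : Rlow C x X Y X X = (Ω.ω x X Y / Ω.ω x X W) * Rlow C x X W X X := by
    have := h1
    field_simp at this ⊢
    linarith
  rw [h2]
  field_simp

/-- Two-sided Grönwall-type vanishing lemma: a function with `‖g'‖ ≤ C‖g‖` on an
interval which vanishes at an interior point vanishes identically. -/
lemma gron_right {X : Type*} [NormedAddCommGroup X] [NormedSpace ℝ X]
    {g g' : ℝ → X} {c b CC : ℝ} (hC : 0 ≤ CC)
    (hd : ∀ u ∈ Icc c b, HasDerivAt g (g' u) u)
    (hbd : ∀ u ∈ Icc c b, ‖g' u‖ ≤ CC * ‖g u‖)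
    (h0 : g c = 0) : ∀ u ∈ Icc c b, g u = 0 := by
  intro u hu
  have hcont : ContinuousOn g (Icc c b) := fun v hv =>
    (hd v hv).continuousAt.continuousWithinAt
  have key := norm_le_gronwallBound_of_norm_deriv_right_le (δ := 0) (K := CC) (ε := 0)
    hcont (fun v hv => (hd v (Ico_subset_Icc_self hv)).hasDerivWithinAt)
    (by simp [h0]) (fun v hv => by simpa using hbd v (Ico_subset_Icc_self hv)) u hu
  rw [gronwallBound_ε0, zero_mul] at key
  exact norm_le_zero_iff.mp key

lemma gron_two {X : Type*} [NormedAddCommGroup X] [NormedSpace ℝ X]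
    {g g' : ℝ → X} {a b c CC : ℝ} (hC : 0 ≤ CC) (hac : a ≤ c) (hcb : c ≤ b)
    (hd : ∀ u ∈ Icc a b, HasDerivAt g (g' u) u)
    (hbd : ∀ u ∈ Icc a b, ‖g' u‖ ≤ CC * ‖g u‖)
    (h0 : g c = 0) : ∀ u ∈ Icc a b, g u = 0 := by
  intro u hu
  rcases le_total c u with hcu | huc
  · exact gron_right hC (fun v hv => hd v ⟨hac.trans hv.1, hv.2⟩)
      (fun v hv => hbd v ⟨hac.trans hv.1, hv.2⟩) h0 u ⟨hcu, hu.2⟩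
  · -- reflect
    have hmem : ∀ v ∈ Icc c (2 * c - a), 2 * c - v ∈ Icc a b := by
      intro v hv
      constructor
      · linarith [hv.2]
      · linarith [hv.1]
    have hd2 : ∀ v ∈ Icc c (2 * c - a),
        HasDerivAt (fun v => g (2 * c - v)) (-g' (2 * c - v)) v := by
      intro v hv
      have h1 : HasDerivAt (fun v : ℝ => 2 * c - v) (-1) v := by
        simpa using (hasDerivAt_id v).const_sub (2 * c)
      have h2 : HasDerivAt g (g' (2 * c - v)) (2 * c - v) := hd _ (hmem v hv)
      have := h2.scomp (x := v) h1
      rw [neg_one_smul] at this; exact this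
    have hbd2 : ∀ v ∈ Icc c (2 * c - a),
        ‖-g' (2 * c - v)‖ ≤ CC * ‖g (2 * c - v)‖ := by
      intro v hv
      rw [norm_neg]
      exact hbd _ (hmem v hv)
    have h02 : g (2 * c - c) = 0 := by
      rw [show 2 * c - c = c by ring]; exact h0
    have := gron_right (g := fun v => g (2 * c - v)) (g' := fun v => -g' (2 * c - v))
      hC hd2 hbd2 h02 (2 * c - u) ⟨by linarith, by linarith [hu.1]⟩
    simpa [show 2 * c - (2 * c - u) = u by ring] using this

/-- Derivative of `t ↦ Ω(V t, γ̇ t)` along a geodesic is `Ω(∇V, γ̇)`. -/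
lemma deriv_omega_pair {Ω : SympForm E} (C : SympConnection Ω)
    {I : Set ℝ} (hIopen : IsOpen I)
    {γ : ℝ → E} (hγ : ContDiffOn ℝ (⊤ : ℕ∞) γ I)
    (hgeo : ∀ t ∈ I, deriv (deriv γ) t + C.Γ (γ t) (deriv γ t) (deriv γ t) = 0)
    (V : ℝ → E) (hV : ContDiffOn ℝ (⊤ : ℕ∞) V I) {t : ℝ} (ht : t ∈ I) :
    HasDerivAt (fun u => Ω.ω (γ u) (V u) (deriv γ u))
      (Ω.ω (γ t) (covAlong C γ V t) (deriv γ t)) t := by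
  have hγ1 : ContDiffOn ℝ (⊤ : ℕ∞) (deriv γ) I := hγ.deriv_of_isOpen hIopen etop2
  have hγd : HasDerivAt γ (deriv γ t) t :=
    ((hγ.differentiableOn etop1).differentiableAt (hIopen.mem_nhds ht)).hasDerivAt
  have hγdd : HasDerivAt (deriv γ) (deriv (deriv γ) t) t :=
    ((hγ1.differentiableOn etop1).differentiableAt (hIopen.mem_nhds ht)).hasDerivAt
  have hVd : HasDerivAt V (deriv V t) t :=
    ((hV.differentiableOn etop1).differentiableAt (hIopen.mem_nhds ht)).hasDerivAt
  have hΩd : HasDerivAt (fun u => Ω.ω (γ u)) (fderiv ℝ Ω.ω (γ t) (deriv γ t)) t :=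
    (Ω.smooth.differentiable etop1 (γ t)).hasFDerivAt.comp_hasDerivAt t hγd
  have h1 := (hΩd.clm_apply hVd).clm_apply hγdd
  refine h1.congr_deriv ?_
  rw [ContinuousLinearMap.add_apply, C.parallel]
  have hg : deriv (deriv γ) t = -(C.Γ (γ t) (deriv γ t) (deriv γ t)) :=
    eq_neg_of_add_eq_zero_left (hgeo t ht)
  rw [hg, covAlong, map_add, ContinuousLinearMap.add_apply, map_neg]
  ring

set_option maxHeartbeats 2000000 in
/-- The core lemma: a Jacobi field whose symplectic pairing with `γ̇` vanishes at two
distinct points has identically vanishing pairing. -/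
lemma key_statement_15 {E : Type*} [NormedAddCommGroup E] [NormedSpace ℝ E]
    (Ω : SympForm E) (C : SympConnection Ω)
    (hnonpos : ∀ x X Y, Ω.ω x X Y ≠ 0 →
      ∀ Z ∈ Submodule.span ℝ ({X, Y} : Set E), scurv C x X Y Z ≤ 0)
    (I : Set ℝ) (hIopen : IsOpen I) (hIconn : I.OrdConnected)
    (γ : ℝ → E) (hγ : ContDiffOn ℝ (⊤ : ℕ∞) γ I)
    (hgeo : ∀ t ∈ I, deriv (deriv γ) t + C.Γ (γ t) (deriv γ t) (deriv γ t) = 0)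
    (K : ℝ → E) (hK : ContDiffOn ℝ (⊤ : ℕ∞) K I)
    (hKJ : ∀ t ∈ I,
      covAlong C γ (covAlong C γ K) t = curvOp C (γ t) (deriv γ t) (K t) (deriv γ t))
    (s t : ℝ) (hs : s ∈ I) (ht : t ∈ I) (hst : s ≠ t)
    (hFs : Ω.ω (γ s) (K s) (deriv γ s) = 0)
    (hFt : Ω.ω (γ t) (K t) (deriv γ t) = 0) :
    ∀ u ∈ I, Ω.ω (γ u) (K u) (deriv γ u) = 0 := by
  classical
  have hγ1 : ContDiffOn ℝ (⊤ : ℕ∞) (deriv γ) I := hγ.deriv_of_isOpen hIopen etop2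
  have hCA : ∀ V : ℝ → E, ContDiffOn ℝ (⊤ : ℕ∞) V I →
      ContDiffOn ℝ (⊤ : ℕ∞) (covAlong C γ V) I := fun V hV =>
    (hV.deriv_of_isOpen hIopen etop2).add
      (((C.smooth.comp_contDiffOn hγ).clm_apply hγ1).clm_apply hV)
  set F : ℝ → ℝ := fun u => Ω.ω (γ u) (K u) (deriv γ u) with hF
  set F' : ℝ → ℝ := fun u => Ω.ω (γ u) (covAlong C γ K u) (deriv γ u) with hF'
  set H : ℝ → ℝ := fun u => Rlow C (γ u) (deriv γ u) (K u) (deriv γ u) (deriv γ u) with hH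
  have hFd : ∀ u ∈ I, HasDerivAt F (F' u) u := fun u hu =>
    deriv_omega_pair C hIopen hγ hgeo K hK hu
  have hF'd : ∀ u ∈ I, HasDerivAt F' (H u) u := by
    intro u hu
    have h1 := deriv_omega_pair C hIopen hγ hgeo (covAlong C γ K) (hCA K hK) hu
    rw [hKJ u hu] at h1
    exact h1
  -- pointwise sign fact
  have hFH : ∀ u ∈ I, 0 ≤ F u * H u := by
    intro u hu
    rcases eq_or_ne (F u) 0 with h | h
    · rw [h, zero_mul]
    · have hsk : Ω.ω (γ u) (deriv γ u) (K u) = -F u := by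
        rw [hF]; exact Ω.skew _ _ _
      have hne : Ω.ω (γ u) (deriv γ u) (K u) ≠ 0 := by
        rw [hsk]; exact neg_ne_zero.mpr h
      have hsc := hnonpos (γ u) (deriv γ u) (K u) hne (deriv γ u)
        (Submodule.subset_span (Set.mem_insert _ _))
      rw [scurv, hsk] at hsc
      have hsc' : H u / (-F u) ≤ 0 := hsc
      rcases div_nonpos_iff.mp hsc' with ⟨h1, h2⟩ | ⟨h1, h2⟩
      · have h3 : 0 ≤ F u := by linarith
        exact mul_nonneg h3 h1
      · have h3 : F u ≤ 0 := by linarith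
        nlinarith
  -- convexity of F²
  have hIconv : Convex ℝ I := hIconn.convex
  have hFcont : ContinuousOn F I := fun u hu => (hFd u hu).continuousAt.continuousWithinAt
  have hG : ConvexOn ℝ I (fun u => F u ^ 2) := by
    apply convexOn_of_hasDerivWithinAt2_nonneg hIconv (f' := fun u => 2 * F u * F' u)
      (f'' := fun u => 2 * F' u ^ 2 + 2 * (F u * H u)) (hFcont.pow 2)
    · intro x hx
      rw [hIopen.interior_eq] at hx ⊢
      have h1 : HasDerivAt (fun u => F u ^ 2) (2 * F x * F' x) x := by
        have h2 := (hFd x hx).pow 2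
        refine h2.congr_deriv ?_
        push_cast
        ring
      exact h1.hasDerivWithinAt
    · intro x hx
      rw [hIopen.interior_eq] at hx ⊢
      have h1 : HasDerivAt (fun u => 2 * F u * F' u) (2 * F' x ^ 2 + 2 * (F x * H x)) x := by
        have h2 := ((hFd x hx).const_mul 2).mul (hF'd x hx)
        refine h2.congr_deriv ?_
        ring
      exact h1.hasDerivWithinAt
    · intro x hx
      rw [hIopen.interior_eq] at hx
      have h1 := hFH x hx
      nlinarith [sq_nonneg (F' x)]
  -- F vanishes between the two zeros
  obtain ⟨s', t', hs'I, ht'I, hlt, hFs', hFt'⟩ :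
      ∃ s' t', s' ∈ I ∧ t' ∈ I ∧ s' < t' ∧ F s' = 0 ∧ F t' = 0 := by
    rcases lt_or_gt_of_ne hst with h | h
    · exact ⟨s, t, hs, ht, h, hFs, hFt⟩
    · exact ⟨t, s, ht, hs, h, hFt, hFs⟩
  have hsub : Icc s' t' ⊆ I := hIconn.out hs'I ht'I
  have hzero : ∀ u ∈ Icc s' t', F u = 0 := by
    intro u hu
    have hseg : u ∈ segment ℝ s' t' := by rw [segment_eq_Icc hlt.le]; exact hu
    have h1 := hG.le_on_segment hs'I ht'I hseg
    norm_num [hFs', hFt'] at h1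
    have h3 : F u ^ 2 = 0 := by rw [h1]; ring
    exact (pow_eq_zero_iff two_ne_zero).mp h3
  set m := (s' + t') / 2 with hm
  have hmo : m ∈ Ioo s' t' := ⟨by rw [hm]; linarith, by rw [hm]; linarith⟩
  have hmI : m ∈ I := hsub (Ioo_subset_Icc_self hmo)
  have hFm : F m = 0 := hzero m (Ioo_subset_Icc_self hmo)
  have hF'm : F' m = 0 := by
    have h1 : deriv F m = F' m := (hFd m hmI).deriv
    have hev : F =ᶠ[nhds m] (fun _ => (0 : ℝ)) :=
      Filter.eventuallyEq_of_mem (isOpen_Ioo.mem_nhds hmo)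
        (fun v hv => hzero v (Ioo_subset_Icc_self hv))
    rw [← h1, hev.deriv_eq]
    simp
  -- local propagation of the zero set
  have hZloc : ∀ u₀, u₀ ∈ I ∧ F u₀ = 0 ∧ F' u₀ = 0 →
      ∃ δ > 0, ∀ v ∈ Metric.ball u₀ δ, v ∈ I ∧ F v = 0 ∧ F' v = 0 := by
    rintro u₀ ⟨hu₀I, hF0, hF'0⟩
    obtain ⟨ε₀, hε₀, hball₀⟩ := Metric.isOpen_iff.mp hIopen u₀ hu₀I
    have hIcc0 : Icc (u₀ - ε₀ / 2) (u₀ + ε₀ / 2) ⊆ I := by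
      intro x hx
      apply hball₀
      rw [Real.ball_eq_Ioo]
      exact ⟨by linarith [hx.1], by linarith [hx.2]⟩
    by_cases hX : deriv γ u₀ = 0
    · -- the velocity vanishes identically nearby
      have hγ1c : ContinuousOn (deriv γ) (Icc (u₀ - ε₀ / 2) (u₀ + ε₀ / 2)) :=
        hγ1.continuousOn.mono hIcc0
      obtain ⟨B1, hB1⟩ := isCompact_Icc.exists_bound_of_continuousOn hγ1c
      have hΓc0 : ContinuousOn (fun u => C.Γ (γ u)) (Icc (u₀ - ε₀ / 2) (u₀ + ε₀ / 2)) :=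
        C.smooth.continuous.comp_continuousOn (hγ.continuousOn.mono hIcc0)
      obtain ⟨B2, hB2⟩ :=
        (isCompact_Icc : IsCompact (Icc (u₀ - ε₀ / 2) (u₀ + ε₀ / 2))).exists_bound_of_continuousOn
          (E := E →L[ℝ] E →L[ℝ] E) hΓc0
      have hgd : ∀ u ∈ Icc (u₀ - ε₀ / 2) (u₀ + ε₀ / 2),
          HasDerivAt (deriv γ) (deriv (deriv γ) u) u := fun u hu =>
        ((hγ1.differentiableOn etop1).differentiableAt (hIopen.mem_nhds (hIcc0 hu))).hasDerivAt
      have hgb : ∀ u ∈ Icc (u₀ - ε₀ / 2) (u₀ + ε₀ / 2),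
          ‖deriv (deriv γ) u‖ ≤ max (B2 * B1) 0 * ‖deriv γ u‖ := by
        intro u hu
        have hg : deriv (deriv γ) u = -(C.Γ (γ u) (deriv γ u) (deriv γ u)) :=
          eq_neg_of_add_eq_zero_left (hgeo u (hIcc0 hu))
        rw [hg, norm_neg]
        have h1 : ‖C.Γ (γ u) (deriv γ u) (deriv γ u)‖
            ≤ ‖C.Γ (γ u)‖ * ‖deriv γ u‖ * ‖deriv γ u‖ :=
          ContinuousLinearMap.le_opNorm₂ _ _ _
        have h2 : ‖C.Γ (γ u)‖ ≤ B2 := hB2 u hu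
        have h3 : ‖deriv γ u‖ ≤ B1 := by simpa using hB1 u hu
        have h4 : ‖C.Γ (γ u)‖ * ‖deriv γ u‖ ≤ max (B2 * B1) 0 := by
          refine le_trans ?_ (le_max_left _ _)
          exact mul_le_mul h2 h3 (norm_nonneg _)
            (le_trans (ContinuousLinearMap.opNorm_nonneg _) h2)
        calc ‖C.Γ (γ u) (deriv γ u) (deriv γ u)‖
            ≤ ‖C.Γ (γ u)‖ * ‖deriv γ u‖ * ‖deriv γ u‖ := h1
          _ ≤ max (B2 * B1) 0 * ‖deriv γ u‖ :=
              mul_le_mul_of_nonneg_right h4 (norm_nonneg _)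
      have hvan := gron_two (le_max_right _ _)
        (by linarith : u₀ - ε₀ / 2 ≤ u₀) (by linarith : u₀ ≤ u₀ + ε₀ / 2) hgd hgb hX
      refine ⟨ε₀ / 2, by positivity, fun v hv => ?_⟩
      have hvJ : v ∈ Icc (u₀ - ε₀ / 2) (u₀ + ε₀ / 2) := by
        rw [Real.ball_eq_Ioo] at hv
        exact Ioo_subset_Icc_self hv
      refine ⟨hIcc0 hvJ, ?_, ?_⟩
      · rw [hF]
        simp only []
        rw [hvan v hvJ]
        exact map_zero _
      · rw [hF']
        simp only []
        rw [hvan v hvJ]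
        exact map_zero _
    · -- the velocity is nonzero nearby: genuine Jacobi estimate
      obtain ⟨W, hW⟩ : ∃ W, Ω.ω (γ u₀) (deriv γ u₀) W ≠ 0 := by
        by_contra h
        push_neg at h
        exact hX (Ω.nondeg _ _ h)
      have hγc : ContinuousOn γ I := hγ.continuousOn
      have hγ1cI : ContinuousOn (deriv γ) I := hγ1.continuousOn
      have hΩc : ContinuousOn (fun u => Ω.ω (γ u)) I :=
        Ω.smooth.continuous.comp_continuousOn hγc
      have hDc : ContinuousOn (fun u => Ω.ω (γ u) (deriv γ u) W) I :=
        (hΩc.clm_apply hγ1cI).clm_apply continuousOn_const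
      have hDat : ContinuousAt (fun u => Ω.ω (γ u) (deriv γ u) W) u₀ :=
        hDc.continuousAt (hIopen.mem_nhds hu₀I)
      have hev : ∀ᶠ v in nhds u₀, Ω.ω (γ v) (deriv γ v) W ≠ 0 := hDat.eventually_ne hW
      obtain ⟨δ₁, hδ₁, hball₁⟩ := Metric.eventually_nhds_iff_ball.mp hev
      have hδ : 0 < min (ε₀ / 2) (δ₁ / 2) := by positivity
      have hJI : Icc (u₀ - min (ε₀ / 2) (δ₁ / 2)) (u₀ + min (ε₀ / 2) (δ₁ / 2)) ⊆ I := by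
        refine subset_trans (Icc_subset_Icc ?_ ?_) hIcc0
        · have := min_le_left (ε₀ / 2) (δ₁ / 2); linarith
        · have := min_le_left (ε₀ / 2) (δ₁ / 2); linarith
      have hJD : ∀ u ∈ Icc (u₀ - min (ε₀ / 2) (δ₁ / 2)) (u₀ + min (ε₀ / 2) (δ₁ / 2)),
          Ω.ω (γ u) (deriv γ u) W ≠ 0 := by
        intro u hu
        apply hball₁
        rw [Metric.mem_ball, Real.dist_eq]
        have h1 : |u - u₀| ≤ min (ε₀ / 2) (δ₁ / 2) :=
          abs_le.mpr ⟨by linarith [hu.1], by linarith [hu.2]⟩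
        have h2 := min_le_right (ε₀ / 2) (δ₁ / 2)
        linarith
      have hfdC : Continuous (fderiv ℝ C.Γ) := C.smooth.continuous_fderiv etop1
      have hfdc : ContinuousOn (fun u => fderiv ℝ C.Γ (γ u)) I := hfdC.comp_continuousOn hγc
      have hΓc : ContinuousOn (fun u => C.Γ (γ u)) I :=
        C.smooth.continuous.comp_continuousOn hγc
      have hcurvc : ContinuousOn (fun u => curvOp C (γ u) (deriv γ u) W) I := by
        simp only [curvOp]
        exact ((((hfdc.clm_apply hγ1cI).clm_apply continuousOn_const).sub
          ((hfdc.clm_apply continuousOn_const).clm_apply hγ1cI)).add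
          ((hΓc.clm_apply hγ1cI).clm_comp (hΓc.clm_apply continuousOn_const))).sub
          ((hΓc.clm_apply continuousOn_const).clm_comp (hΓc.clm_apply hγ1cI))
      have hNc : ContinuousOn
          (fun u => Rlow C (γ u) (deriv γ u) W (deriv γ u) (deriv γ u)) I := by
        simp only [Rlow]
        exact (hΩc.clm_apply (hcurvc.clm_apply hγ1cI)).clm_apply hγ1cI
      have hqc : ContinuousOn (fun u =>
          Rlow C (γ u) (deriv γ u) W (deriv γ u) (deriv γ u) / Ω.ω (γ u) (deriv γ u) W)
          (Icc (u₀ - min (ε₀ / 2) (δ₁ / 2)) (u₀ + min (ε₀ / 2) (δ₁ / 2))) :=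
        (hNc.mono hJI).div (hDc.mono hJI) hJD
      obtain ⟨Cq, hCq⟩ := isCompact_Icc.exists_bound_of_continuousOn hqc
      have hCq0 : (0:ℝ) ≤ max Cq 0 := le_max_right _ _
      have hHb : ∀ u ∈ Icc (u₀ - min (ε₀ / 2) (δ₁ / 2)) (u₀ + min (ε₀ / 2) (δ₁ / 2)),
          |H u| ≤ max Cq 0 * |F u| := by
        intro u hu
        have hD := hJD u hu
        have hid := rlow_prop hnonpos (γ u) (deriv γ u) W (K u) hD
        have hsk : Ω.ω (γ u) (deriv γ u) (K u) = -F u := by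
          rw [hF]; exact Ω.skew _ _ _
        rw [hsk] at hid
        have hHu : H u = (Rlow C (γ u) (deriv γ u) W (deriv γ u) (deriv γ u)
            / Ω.ω (γ u) (deriv γ u) W) * (-F u) := by
          rw [hH]
          field_simp
          linarith [hid]
        rw [hHu, abs_mul, abs_neg]
        apply mul_le_mul_of_nonneg_right _ (abs_nonneg _)
        calc |Rlow C (γ u) (deriv γ u) W (deriv γ u) (deriv γ u)
            / Ω.ω (γ u) (deriv γ u) W|
            = ‖Rlow C (γ u) (deriv γ u) W (deriv γ u) (deriv γ u)
            / Ω.ω (γ u) (deriv γ u) W‖ := (Real.norm_eq_abs _).symm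
          _ ≤ Cq := hCq u hu
          _ ≤ max Cq 0 := le_max_left _ _
      have hgd : ∀ u ∈ Icc (u₀ - min (ε₀ / 2) (δ₁ / 2)) (u₀ + min (ε₀ / 2) (δ₁ / 2)),
          HasDerivAt (fun v => (F v, F' v)) ((F' u, H u)) u := fun u hu =>
        (hFd u (hJI hu)).prodMk (hF'd u (hJI hu))
      have hgb : ∀ u ∈ Icc (u₀ - min (ε₀ / 2) (δ₁ / 2)) (u₀ + min (ε₀ / 2) (δ₁ / 2)),
          ‖(F' u, H u)‖ ≤ (1 + max Cq 0) * ‖(F u, F' u)‖ := by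
        intro u hu
        rw [Prod.norm_def, Prod.norm_def]
        simp only [Real.norm_eq_abs]
        have h1 := hHb u hu
        have h2 : |F u| ≤ max |F u| |F' u| := le_max_left _ _
        have h3 : |F' u| ≤ max |F u| |F' u| := le_max_right _ _
        have h4 : (0:ℝ) ≤ max |F u| |F' u| := le_trans (abs_nonneg _) h2
        apply max_le
        · nlinarith
        · nlinarith [mul_le_mul_of_nonneg_left h2 hCq0]
      have h0pair : (fun v => (F v, F' v)) u₀ = 0 := by
        show (F u₀, F' u₀) = (0, 0)
        rw [hF0, hF'0]
      have hvan := gron_two (by linarith : (0:ℝ) ≤ 1 + max Cq 0)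
        (by linarith [hδ] : u₀ - min (ε₀ / 2) (δ₁ / 2) ≤ u₀)
        (by linarith [hδ] : u₀ ≤ u₀ + min (ε₀ / 2) (δ₁ / 2)) hgd hgb h0pair
      refine ⟨min (ε₀ / 2) (δ₁ / 2), hδ, fun v hv => ?_⟩
      have hvJ : v ∈ Icc (u₀ - min (ε₀ / 2) (δ₁ / 2)) (u₀ + min (ε₀ / 2) (δ₁ / 2)) := by
        rw [Real.ball_eq_Ioo] at hv
        exact Ioo_subset_Icc_self hv
      have hvv := hvan v hvJ
      refine ⟨hJI hvJ, ?_, ?_⟩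
      · simpa using congrArg Prod.fst hvv
      · simpa using congrArg Prod.snd hvv
  -- the zero set is clopen in I, hence everything
  have hZopen : IsOpen {u : ℝ | u ∈ I ∧ F u = 0 ∧ F' u = 0} := by
    rw [Metric.isOpen_iff]
    intro u hu
    obtain ⟨δ, hδ, hb⟩ := hZloc u hu
    exact ⟨δ, hδ, fun v hv => hb v hv⟩
  have hVopen : IsOpen {u : ℝ | u ∈ I ∧ (F u ≠ 0 ∨ F' u ≠ 0)} := by
    rw [isOpen_iff_mem_nhds]
    rintro u ⟨huI, hcase⟩
    have e1 : I ∈ nhds u := hIopen.mem_nhds huI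
    rcases hcase with h | h
    · have e2 : ∀ᶠ v in nhds u, F v ≠ 0 := (hFd u huI).continuousAt.eventually_ne h
      filter_upwards [e1, e2] with v hv1 hv2
      exact ⟨hv1, Or.inl hv2⟩
    · have e2 : ∀ᶠ v in nhds u, F' v ≠ 0 := (hF'd u huI).continuousAt.eventually_ne h
      filter_upwards [e1, e2] with v hv1 hv2
      exact ⟨hv1, Or.inr hv2⟩
  have hdisj : Disjoint {u : ℝ | u ∈ I ∧ F u = 0 ∧ F' u = 0}
      {u : ℝ | u ∈ I ∧ (F u ≠ 0 ∨ F' u ≠ 0)} := by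
    rw [Set.disjoint_left]
    rintro u ⟨_, h1, h2⟩ ⟨_, h3 | h3⟩
    · exact h3 h1
    · exact h3 h2
  have hcover : I ⊆ {u : ℝ | u ∈ I ∧ F u = 0 ∧ F' u = 0}
      ∪ {u : ℝ | u ∈ I ∧ (F u ≠ 0 ∨ F' u ≠ 0)} := by
    intro u hu
    by_cases h1 : F u = 0
    · by_cases h2 : F' u = 0
      · exact Or.inl ⟨hu, h1, h2⟩
      · exact Or.inr ⟨hu, Or.inr h2⟩
    · exact Or.inr ⟨hu, Or.inl h1⟩
  have hsubZ : I ⊆ {u : ℝ | u ∈ I ∧ F u = 0 ∧ F' u = 0} :=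
    hIconn.isPreconnected.subset_left_of_subset_union hZopen hVopen hdisj hcover
      ⟨m, hmI, hmI, hFm, hF'm⟩
  intro u hu
  exact (hsubZ hu).2.1

end AuxStatement15
/-- Let `C` be a symplectic connection with nonpositive symplectic sectional
curvature, `γ : I → M` a (maximal) geodesic on an open interval `I`, and `Jf` a Jacobi field
along `γ`.  Then exactly one of the following holds: (1) `t ↦ Ω(Jf(t), γ̇(t))` has at most
one zero in `I` (so in particular `Jf` vanishes at most once); or (2) `Ω(Jf(t), γ̇(t)) ≡ 0`
on `I`.  In particular any Jacobi field along `γ` vanishing at two distinct points (conjugate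
points) is coisotropic. -/
theorem statement_15 {E : Type*} [NormedAddCommGroup E] [NormedSpace ℝ E]
    [FiniteDimensional ℝ E]
    (Ω : SympForm E) (C : SympConnection Ω)
    (hnonpos : ∀ x X Y, Ω.ω x X Y ≠ 0 →
      ∀ Z ∈ Submodule.span ℝ ({X, Y} : Set E), scurv C x X Y Z ≤ 0)
    (I : Set ℝ) (hIopen : IsOpen I) (hIconn : I.OrdConnected) (hIne : I.Nonempty)
    (γ : ℝ → E) (hγ : ContDiffOn ℝ (⊤ : ℕ∞) γ I)
    (hgeo : ∀ t ∈ I, deriv (deriv γ) t + C.Γ (γ t) (deriv γ t) (deriv γ t) = 0)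
    (Jf : ℝ → E) (hJf : ContDiffOn ℝ (⊤ : ℕ∞) Jf I)
    (hJacobi : ∀ t ∈ I,
      covAlong C γ (covAlong C γ Jf) t = curvOp C (γ t) (deriv γ t) (Jf t) (deriv γ t)) :
    Xor'
      (∀ s ∈ I, ∀ t ∈ I,
        Ω.ω (γ s) (Jf s) (deriv γ s) = 0 → Ω.ω (γ t) (Jf t) (deriv γ t) = 0 → s = t)
      (∀ t ∈ I, Ω.ω (γ t) (Jf t) (deriv γ t) = 0)
    ∧ (∀ K : ℝ → E, ContDiffOn ℝ (⊤ : ℕ∞) K I →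
        (∀ t ∈ I,
          covAlong C γ (covAlong C γ K) t = curvOp C (γ t) (deriv γ t) (K t) (deriv γ t)) →
        ∀ s ∈ I, ∀ t ∈ I, s ≠ t → K s = 0 → K t = 0 →
          ∀ u ∈ I, Ω.ω (γ u) (K u) (deriv γ u) = 0) := by
  constructor
  · by_cases hz : ∃ s ∈ I, ∃ t ∈ I, s ≠ t ∧ Ω.ω (γ s) (Jf s) (deriv γ s) = 0 ∧
      Ω.ω (γ t) (Jf t) (deriv γ t) = 0
    · obtain ⟨s, hs, t, ht, hst, h1, h2⟩ := hz
      have hall := key_statement_15 Ω C hnonpos I hIopen hIconn γ hγ hgeo Jf hJf hJacobi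
        s t hs ht hst h1 h2
      exact Or.inr ⟨fun u hu => hall u hu, fun hP => hst (hP s hs t ht h1 h2)⟩
    · refine Or.inl ⟨?_, ?_⟩
      · intro s hs t ht h1 h2
        by_contra hne
        exact hz ⟨s, hs, t, ht, hne, h1, h2⟩
      · intro hQ
        obtain ⟨a, ha⟩ := hIne
        obtain ⟨ε, hε, hball⟩ := Metric.isOpen_iff.mp hIopen a ha
        have hb : a + ε / 2 ∈ I := by
          apply hball
          rw [Metric.mem_ball, Real.dist_eq]
          rw [abs_of_nonneg (by linarith)]
          linarith
        exact hz ⟨a, ha, a + ε / 2, hb, by linarith, hQ a ha, hQ _ hb⟩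
  · intro K hK hKJ s hs t ht hst hKs hKt u hu
    apply key_statement_15 Ω C hnonpos I hIopen hIconn γ hγ hgeo K hK hKJ s t hs ht hst
      ?_ ?_ u hu
    · simp [hKs]
    · simp [hKt]
end

section
/- Let ∇ be a symplectic connection on a symplectic manifold (M, Ω) and Z a vector field on M. For any p ∈ M and any 2-dimensional symplectic subspace L ⊂ T_pM containing Z_p, if X and Y are vector fields spanning L then scurv_{p,L}(Z)·Ω(X, Y) = d((∇_Z Z)^♭ − L_Z(Z^♭))(X, Y) + 2Ω(∇_X Z, ∇_Y Z), where T^♭ = Ω(T, ·) for a vector field T and L_Z denotes the Lie derivative. -/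
variable {E : Type*} [NormedAddCommGroup E] [NormedSpace ℝ E]

/-- The one-form `β = (∇_Z Z)^♭ − L_Z(Z^♭)`, where `T^♭ = Ω(T, ·)` and `L_Z` is the Lie
derivative, evaluated on a constant vector `w` (using `[Z, w] = -DZ(w)` for the constant
extension of `w`). -/
noncomputable def oneFormSec {E : Type*} [NormedAddCommGroup E] [NormedSpace ℝ E]
    {Ω : SympForm E} (C : SympConnection Ω) (Z : E → E) (y w : E) : ℝ :=
  Ω.ω y (covVF C Z Z y) w
    - (fderiv ℝ (fun y' => Ω.ω y' (Z y') w) y (Z y) + Ω.ω y (Z y) (fderiv ℝ Z y w))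

section AuxStatement16

variable {E : Type*} [NormedAddCommGroup E] [NormedSpace ℝ E]

/-- fderiv of a "trilinear" application. -/
lemma aux16_fderiv_tri {F : Type*} [NormedAddCommGroup F] [NormedSpace ℝ F]
    {f : E → E →L[ℝ] E →L[ℝ] F} {a b : E → E} {x : E}
    (hf : DifferentiableAt ℝ f x) (ha : DifferentiableAt ℝ a x) (hb : DifferentiableAt ℝ b x)
    (v : E) :
    fderiv ℝ (fun y => f y (a y) (b y)) x v
      = fderiv ℝ f x v (a x) (b x) + f x (fderiv ℝ a x v) (b x)
        + f x (a x) (fderiv ℝ b x v) := by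
  have h1 : HasFDerivAt (fun y => f y (a y))
      (((f x).comp (fderiv ℝ a x)) + ((fderiv ℝ f x).flip (a x))) x :=
    hf.hasFDerivAt.clm_apply ha.hasFDerivAt
  have h2 := h1.clm_apply hb.hasFDerivAt
  rw [h2.fderiv]
  simp only [ContinuousLinearMap.add_apply, ContinuousLinearMap.comp_apply,
    ContinuousLinearMap.flip_apply]
  abel

lemma aux16_fderiv_clm_apply_const {F : Type*} [NormedAddCommGroup F] [NormedSpace ℝ F]
    {f : E → E →L[ℝ] F} {x : E} (hf : DifferentiableAt ℝ f x) (w v : E) :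
    fderiv ℝ (fun y => f y w) x v = fderiv ℝ f x v w := by
  have h := hf.hasFDerivAt.clm_apply (hasFDerivAt_const w x)
  rw [h.fderiv]
  simp

end AuxStatement16

/-- For a symplectic connection `C`, a smooth vector field `Z`, a point `x` and
a 2-dimensional symplectic subspace `L ⊆ T_xM` containing `Z_x` and spanned by `X, Y`:
`scurv_{x,L}(Z)·Ω(X,Y) = d((∇_Z Z)^♭ − L_Z(Z^♭))(X,Y) + 2Ω(∇_X Z, ∇_Y Z)`, the exterior
derivative being evaluated on the constant extensions of `X` and `Y` (it is tensorial). -/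
theorem statement_16 {E : Type*} [NormedAddCommGroup E] [NormedSpace ℝ E]
    [FiniteDimensional ℝ E]
    (Ω : SympForm E) (C : SympConnection Ω)
    (Z : E → E) (hZ : ContDiff ℝ (⊤ : ℕ∞) Z)
    (x X Y : E) (hXY : Ω.ω x X Y ≠ 0)
    (hZL : Z x ∈ Submodule.span ℝ ({X, Y} : Set E)) :
    scurv C x X Y (Z x) * Ω.ω x X Y
      = (fderiv ℝ (fun y => oneFormSec C Z y Y) x X
          - fderiv ℝ (fun y => oneFormSec C Z y X) x Y)
        + 2 * Ω.ω x (fderiv ℝ Z x X + C.Γ x X (Z x)) (fderiv ℝ Z x Y + C.Γ x Y (Z x)) := by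
  have hωd : Differentiable ℝ Ω.ω := Ω.smooth.differentiable (by simp)
  have hZd : Differentiable ℝ Z := hZ.differentiable (by simp)
  have hΓd : Differentiable ℝ C.Γ := C.smooth.differentiable (by simp)
  have hDZd : Differentiable ℝ (fderiv ℝ Z) :=
    (hZ.fderiv_right (m := (⊤ : ℕ∞)) (by exact_mod_cast le_top)).differentiable (by simp)
  -- Simplified form of the one-form: `β(y, w) = -Ω(Z, ∇_w Z)`.
  have hβ : ∀ y w, oneFormSec C Z y w
      = -(Ω.ω y (Z y) (fderiv ℝ Z y w + C.Γ y w (Z y))) := by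
    intro y w
    have h := aux16_fderiv_tri (f := Ω.ω) (a := Z) (b := fun _ => w)
      (hωd y) (hZd y) (differentiableAt_const w) (Z y)
    simp only [fderiv_fun_const, Pi.zero_apply, ContinuousLinearMap.zero_apply, map_zero,
      ContinuousLinearMap.zero_apply, add_zero] at h
    rw [oneFormSec, covVF, h, C.parallel y (Z y) (Z y) w, C.symm y (Z y) w]
    simp only [map_add, ContinuousLinearMap.add_apply]
    ring
  -- Differentiability of `y ↦ ∇_w Z (y)`.
  have hWd : ∀ w : E, DifferentiableAt ℝ (fun y => fderiv ℝ Z y w + C.Γ y w (Z y)) x :=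
    fun w => ((hDZd x).clm_apply (differentiableAt_const w)).add
      (((hΓd x).clm_apply (differentiableAt_const w)).clm_apply (hZd x))
  -- Its derivative.
  have hWf : ∀ w v : E, fderiv ℝ (fun y => fderiv ℝ Z y w + C.Γ y w (Z y)) x v
      = fderiv ℝ (fderiv ℝ Z) x v w + (fderiv ℝ C.Γ x v w (Z x) + C.Γ x w (fderiv ℝ Z x v)) := by
    intro w v
    rw [fderiv_fun_add ((hDZd x).clm_apply (differentiableAt_const w))
      (((hΓd x).clm_apply (differentiableAt_const w)).clm_apply (hZd x)),
      ContinuousLinearMap.add_apply,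
      aux16_fderiv_clm_apply_const (hDZd x) w v]
    congr 1
    have h := aux16_fderiv_tri (f := C.Γ) (a := fun _ => w) (b := Z)
      (hΓd x) (differentiableAt_const w) (hZd x) v
    simpa using h
  -- Derivative of the one-form in a constant direction.
  have hmain : ∀ v w : E, fderiv ℝ (fun y => oneFormSec C Z y w) x v
      = -(fderiv ℝ Ω.ω x v (Z x) (fderiv ℝ Z x w + C.Γ x w (Z x))
          + Ω.ω x (fderiv ℝ Z x v) (fderiv ℝ Z x w + C.Γ x w (Z x))
          + Ω.ω x (Z x) (fderiv ℝ (fderiv ℝ Z) x v w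
              + (fderiv ℝ C.Γ x v w (Z x) + C.Γ x w (fderiv ℝ Z x v)))) := by
    intro v w
    have hfun : (fun y => oneFormSec C Z y w)
        = fun y => -(Ω.ω y (Z y) (fderiv ℝ Z y w + C.Γ y w (Z y))) :=
      funext fun y => hβ y w
    rw [hfun, fderiv_fun_neg, ContinuousLinearMap.neg_apply, neg_inj,
      aux16_fderiv_tri (hωd x) (hZd x) (hWd w) v, hWf w v]
  rw [hmain X Y, hmain Y X]
  -- Left-hand side.
  rw [scurv, div_mul_cancel₀ _ hXY, Rlow, curvOp]
  -- Use `∇Ω = 0`.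
  rw [C.parallel x X (Z x) (fderiv ℝ Z x Y + C.Γ x Y (Z x)),
    C.parallel x Y (Z x) (fderiv ℝ Z x X + C.Γ x X (Z x))]
  -- Symmetry of the second derivative of `Z`.
  have hsym : fderiv ℝ (fderiv ℝ Z) x X Y = fderiv ℝ (fderiv ℝ Z) x Y X :=
    second_derivative_symmetric (fun y => (hZd y).hasFDerivAt) ((hDZd x).hasFDerivAt) X Y
  rw [hsym]
  simp only [map_add, map_sub, ContinuousLinearMap.add_apply, ContinuousLinearMap.sub_apply,
    ContinuousLinearMap.comp_apply]
  linarith [Ω.skew x (Z x) (fderiv ℝ C.Γ x X Y (Z x)),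
    Ω.skew x (Z x) (fderiv ℝ C.Γ x Y X (Z x)),
    Ω.skew x (Z x) (C.Γ x X (C.Γ x Y (Z x))),
    Ω.skew x (Z x) (C.Γ x Y (C.Γ x X (Z x))),
    Ω.skew x (fderiv ℝ Z x X) (fderiv ℝ Z x Y),
    Ω.skew x (fderiv ℝ Z x X) (C.Γ x Y (Z x)),
    Ω.skew x (C.Γ x X (Z x)) (fderiv ℝ Z x Y),
    Ω.skew x (C.Γ x X (Z x)) (C.Γ x Y (Z x))]
end

section
/- Let ∇ be a symplectic connection on a symplectic manifold (M, Ω). If there is a symplectic vector field Z on M such that ∇_Z Z = 0, then for any p ∈ M with Z_p ≠ 0, the symplectic sectional curvature of any 2-dimensional symplectic subspace L ⊂ T_pM containing Z_p is not definite (indeed scurv_{p,L}(Z_p) = 0). -/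
variable {E : Type*} [NormedAddCommGroup E] [NormedSpace ℝ E]

/-- If `Z` is a symplectic vector field (`L_Z Ω = 0`, expressed on constant
vector fields) with `∇_Z Z = 0`, then at any point `x` with `Z_x ≠ 0` the symplectic
sectional curvature of any 2-dimensional symplectic subspace `L` containing `Z_x` (spanned by
`X, Y`) is not definite; indeed `scurv_{x,L}(Z_x) = 0`. -/
theorem statement_17 {E : Type*} [NormedAddCommGroup E] [NormedSpace ℝ E]
    [FiniteDimensional ℝ E]
    (Ω : SympForm E) (C : SympConnection Ω)
    (Z : E → E) (hZ : ContDiff ℝ (⊤ : ℕ∞) Z)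
    (hsympZ : ∀ x u v,
      fderiv ℝ (fun y => Ω.ω y u v) x (Z x)
        + Ω.ω x (fderiv ℝ Z x u) v + Ω.ω x u (fderiv ℝ Z x v) = 0)
    (hgeo : ∀ x, fderiv ℝ Z x (Z x) + C.Γ x (Z x) (Z x) = 0)
    (x : E) (hZx : Z x ≠ 0)
    (X Y : E) (hXY : Ω.ω x X Y ≠ 0)
    (hZL : Z x ∈ Submodule.span ℝ ({X, Y} : Set E)) :
    scurv C x X Y (Z x) = 0
    ∧ ¬ ((∀ W ∈ Submodule.span ℝ ({X, Y} : Set E), W ≠ 0 → 0 < scurv C x X Y W)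
        ∨ (∀ W ∈ Submodule.span ℝ ({X, Y} : Set E), W ≠ 0 → scurv C x X Y W < 0)) := by
  classical
  have hω : ContDiff ℝ (⊤:ℕ∞) Ω.ω := Ω.smooth
  have hΓ : ContDiff ℝ (⊤:ℕ∞) C.Γ := C.smooth
  have hZ' : ContDiff ℝ (⊤:ℕ∞) (fderiv ℝ Z) := hZ.fderiv_right (by norm_cast)
  -- symmetry of B(u,v) = ω(∇_u Z, v)
  have hBsymm : ∀ y u v, Ω.ω y (fderiv ℝ Z y u + C.Γ y u (Z y)) v
      = Ω.ω y (fderiv ℝ Z y v + C.Γ y v (Z y)) u := by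
    intro y u v
    have hder : fderiv ℝ (fun t => Ω.ω t u v) y (Z y) = fderiv ℝ Ω.ω y (Z y) u v := by
      have hc : HasFDerivAt Ω.ω (fderiv ℝ Ω.ω y) y :=
        ((hω.differentiable (by simp)) y).hasFDerivAt
      have h2 := (hc.clm_apply (hasFDerivAt_const u y)).clm_apply (hasFDerivAt_const v y)
      rw [h2.fderiv]
      simp
    have h := hsympZ y u v
    rw [hder, C.parallel y (Z y) u v] at h
    have hs1 := Ω.skew y u (fderiv ℝ Z y v + C.Γ y v (Z y))
    have hsym1 : C.Γ y (Z y) u = C.Γ y u (Z y) := C.symm y (Z y) u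
    have hsym2 : C.Γ y (Z y) v = C.Γ y v (Z y) := C.symm y (Z y) v
    rw [hsym1, hsym2] at h
    simp only [map_add, ContinuousLinearMap.add_apply] at h hs1 ⊢
    linarith
  -- B(u, Z) = 0 everywhere
  have hBZ : ∀ y u, Ω.ω y (fderiv ℝ Z y u + C.Γ y u (Z y)) (Z y) = 0 := by
    intro y u
    rw [hBsymm y u (Z y), hgeo y]
    simp
  -- the derivative identity, for each fixed u : the function y ↦ B_y(u, Z y) is zero
  have hEQ : ∀ u w : E,
      fderiv ℝ Ω.ω x w (fderiv ℝ Z x u + C.Γ x u (Z x)) (Z x)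
      + Ω.ω x (fderiv ℝ (fderiv ℝ Z) x w u + C.Γ x u (fderiv ℝ Z x w)
          + fderiv ℝ C.Γ x w u (Z x)) (Z x)
      + Ω.ω x (fderiv ℝ Z x u + C.Γ x u (Z x)) (fderiv ℝ Z x w) = 0 := by
    intro u w
    have hZf : HasFDerivAt Z (fderiv ℝ Z x) x := ((hZ.differentiable (by simp)) x).hasFDerivAt
    have hc1 : HasFDerivAt C.Γ (fderiv ℝ C.Γ x) x := ((hΓ.differentiable (by simp)) x).hasFDerivAt
    have hd1 : HasFDerivAt (fderiv ℝ Z) (fderiv ℝ (fderiv ℝ Z) x) x :=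
      ((hZ'.differentiable (by simp)) x).hasFDerivAt
    have hω1 : HasFDerivAt Ω.ω (fderiv ℝ Ω.ω x) x := ((hω.differentiable (by simp)) x).hasFDerivAt
    have hg2 := (hc1.clm_apply (hasFDerivAt_const u x)).clm_apply hZf
    have hg3 := hd1.clm_apply (hasFDerivAt_const u x)
    have hV := hg3.add hg2
    have hF := (hω1.clm_apply hV).clm_apply hZf
    have h0F : HasFDerivAt
        (fun y => Ω.ω y (fderiv ℝ Z y u + C.Γ y u (Z y)) (Z y)) (0 : E →L[ℝ] ℝ) x :=
      (hasFDerivAt_const (0:ℝ) x).congr_of_eventuallyEq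
        (Filter.Eventually.of_forall fun y => hBZ y u)
    have hD : _ = (0 : E →L[ℝ] ℝ) := hF.unique h0F
    have hDw := congrArg (fun (L : E →L[ℝ] ℝ) => L w) hD
    simp only [ContinuousLinearMap.add_apply, ContinuousLinearMap.comp_apply,
      ContinuousLinearMap.flip_apply, ContinuousLinearMap.zero_apply, map_zero,
      ContinuousLinearMap.coe_comp', Function.comp_apply, zero_add, add_zero,
      map_add, ContinuousLinearMap.coe_zero, Pi.zero_apply, Pi.add_apply] at hDw
    simp only [map_add, ContinuousLinearMap.add_apply]
    linarith [hDw]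
  -- second derivative symmetry
  have hsecond : fderiv ℝ (fderiv ℝ Z) x X Y = fderiv ℝ (fderiv ℝ Z) x Y X :=
    second_derivative_symmetric
      (fun y => ((hZ.differentiable (by simp)) y).hasFDerivAt)
      (((hZ'.differentiable (by simp)) x).hasFDerivAt) X Y
  -- coefficients of Z x in the plane
  obtain ⟨a, b, hab⟩ := Submodule.mem_span_pair.mp hZL
  have hQQ : ∀ v : E, Ω.ω x v v = 0 := fun v => by have := Ω.skew x v v; linarith
  have hNZ : a • (fderiv ℝ Z x X + C.Γ x X (Z x))
      + b • (fderiv ℝ Z x Y + C.Γ x Y (Z x)) = 0 := by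
    have h := hgeo x
    nth_rewrite 1 2 [← hab] at h
    simp only [map_add, map_smul, ContinuousLinearMap.add_apply,
      ContinuousLinearMap.smul_apply] at h
    linear_combination (norm := module) h
  have hPQ : Ω.ω x (fderiv ℝ Z x X + C.Γ x X (Z x)) (fderiv ℝ Z x Y + C.Γ x Y (Z x)) = 0 := by
    by_cases ha : a = 0
    · have hb : b ≠ 0 := by
        rintro rfl
        apply hZx
        rw [← hab, ha]; simp
      have hQ0 : (fderiv ℝ Z x Y + C.Γ x Y (Z x)) = 0 := by
        have hb' : b • (fderiv ℝ Z x Y + C.Γ x Y (Z x)) = 0 := by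
          rw [ha] at hNZ; simpa using hNZ
        exact (smul_eq_zero.mp hb').resolve_left hb
      rw [hQ0]; simp
    · have hP' : a • (fderiv ℝ Z x X + C.Γ x X (Z x))
          = -(b • (fderiv ℝ Z x Y + C.Γ x Y (Z x))) := eq_neg_of_add_eq_zero_left hNZ
      have hc := congrArg (fun v => Ω.ω x v (fderiv ℝ Z x Y + C.Γ x Y (Z x))) hP'
      simp only [map_smul, map_neg, ContinuousLinearMap.smul_apply,
        ContinuousLinearMap.neg_apply, smul_eq_mul, hQQ] at hc
      have h0 : a * Ω.ω x (fderiv ℝ Z x X + C.Γ x X (Z x))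
          (fderiv ℝ Z x Y + C.Γ x Y (Z x)) = 0 := by linarith
      exact (mul_eq_zero.mp h0).resolve_left ha
  have hQP : Ω.ω x (fderiv ℝ Z x Y + C.Γ x Y (Z x)) (fderiv ℝ Z x X + C.Γ x X (Z x)) = 0 := by
    rw [Ω.skew, hPQ, neg_zero]
  -- main curvature identity
  have hR : Rlow C x X Y (Z x) (Z x) = 0 := by
    have h1 := hEQ Y X
    have h2 := hEQ X Y
    simp only [C.parallel] at h1 h2
    have hss : Ω.ω x (fderiv ℝ (fderiv ℝ Z) x X Y) (Z x)
        = Ω.ω x (fderiv ℝ (fderiv ℝ Z) x Y X) (Z x) := by rw [hsecond]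
    unfold Rlow curvOp
    simp only [map_add, map_sub, ContinuousLinearMap.add_apply, ContinuousLinearMap.sub_apply,
      ContinuousLinearMap.comp_apply] at h1 h2 hPQ hQP ⊢
    linarith [h1, h2, hss, hPQ, hQP]
  have hscurv : scurv C x X Y (Z x) = 0 := by
    unfold scurv
    rw [hR, zero_div]
  refine ⟨hscurv, ?_⟩
  rintro (hpos | hneg)
  · have := hpos (Z x) hZL hZx
    rw [hscurv] at this
    exact lt_irrefl 0 this
  · have := hneg (Z x) hZL hZx
    rw [hscurv] at this
    exact lt_irrefl 0 this
end

section
/- Let (G, Ω) be a connected symplectic Lie group with Lie algebra 𝔤 that is not unimodular, and let ℓ ∈ 𝔤 be the element defined by Ω(ℓ, x) = tr ad(x) for all x ∈ 𝔤 (so ℓ ≠ 0). Then ℓ is self-adjoint (ad(ℓ)^* = ad(ℓ)), and for the canonical symplectic connection of (G, Ω) the symplectic sectional curvature of any 2-dimensional symplectic subspace of 𝔤 containing ℓ is not definite. -/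
/-- The curvature `R(x,y)z = ∇_x∇_y z − ∇_y∇_x z − ∇_{[x,y]}z` of a left-invariant
connection on a Lie group, evaluated on left-invariant vector fields; the connection is
recorded by the tensor `sad : 𝔤 → End(𝔤)` with `∇_{ℓ^a}ℓ^b = ℓ^{sad(a)b}`. -/
def curvLie {L : Type*} [LieRing L] [LieAlgebra ℝ L]
    (sad : L → L →ₗ[ℝ] L) (x y z : L) : L :=
  sad x (sad y z) - sad y (sad x z) - sad ⁅x, y⁆ z

/-- Let `(G, Ω)` be a connected symplectic Lie group, with Lie algebra `𝔤`
(modeled here by the Lie algebra `𝔤` with the induced nondegenerate closed 2-form `Ω`),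
that is not unimodular, and let `ℓ ∈ 𝔤` be defined by `Ω(ℓ, x) = tr ad(x)` for all `x`
(so `ℓ ≠ 0`).  Then `ℓ` is self-adjoint (`ad(ℓ)^* = ad(ℓ)`, i.e.
`Ω([ℓ,b],c) = -Ω(b,[ℓ,c])`), and for the canonical symplectic connection, determined by
`Ω(sad(a)b, c) = (1/3)(Ω([a,b],c) − Ω(b,[a,c]))`, the symplectic sectional curvature of any
2-dimensional symplectic subspace of `𝔤` containing `ℓ` is not definite. -/
theorem statement_19 {L : Type*} [LieRing L] [LieAlgebra ℝ L] [Module.Finite ℝ L]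
    (Ω : L →ₗ[ℝ] L →ₗ[ℝ] ℝ)
    (hskew : ∀ u v, Ω u v = - Ω v u)
    (hnondeg : ∀ u, (∀ v, Ω u v = 0) → u = 0)
    (hclosed : ∀ x y z, Ω ⁅x, y⁆ z + Ω ⁅y, z⁆ x + Ω ⁅z, x⁆ y = 0)
    (hnotunimod : ∃ x : L, LinearMap.trace ℝ L (LieAlgebra.ad ℝ L x) ≠ 0)
    (ℓ : L) (hℓ : ∀ x : L, Ω ℓ x = LinearMap.trace ℝ L (LieAlgebra.ad ℝ L x))
    (sad : L → L →ₗ[ℝ] L)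
    (hsad : ∀ a b c, Ω (sad a b) c = (1 / 3) * (Ω ⁅a, b⁆ c - Ω b ⁅a, c⁆)) :
    ℓ ≠ 0
    ∧ (∀ b c, Ω ⁅ℓ, b⁆ c = - Ω b ⁅ℓ, c⁆)
    ∧ ∀ X Y : L, Ω X Y ≠ 0 → ℓ ∈ Submodule.span ℝ ({X, Y} : Set L) →
        ¬ ((∀ Z ∈ Submodule.span ℝ ({X, Y} : Set L), Z ≠ 0 →
              0 < Ω (curvLie sad X Y Z) Z / Ω X Y)
          ∨ (∀ Z ∈ Submodule.span ℝ ({X, Y} : Set L), Z ≠ 0 →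
              Ω (curvLie sad X Y Z) Z / Ω X Y < 0)) := by

  have htr : ∀ a b : L, LinearMap.trace ℝ L (LieAlgebra.ad ℝ L ⁅a, b⁆) = 0 := by
    intro a b
    letI : LieRing (Module.End ℝ L) := LieRing.ofAssociativeRing
    rw [LieHom.map_lie, Ring.lie_def, map_sub, LinearMap.trace_mul_comm, sub_self]
  have hΩbr : ∀ a b : L, Ω ℓ ⁅a, b⁆ = 0 := fun a b => (hℓ _).trans (htr a b)
  have hℓne : ℓ ≠ 0 := by
    obtain ⟨x, hx⟩ := hnotunimod
    intro h0
    apply hx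
    rw [← hℓ, h0]
    simp
  have hself : ∀ b c, Ω ⁅ℓ, b⁆ c = - Ω b ⁅ℓ, c⁆ := by
    intro b c
    have h1 := hclosed ℓ b c
    have h2 : Ω ⁅b, c⁆ ℓ = 0 := by rw [hskew, hΩbr]; ring
    have h3 : Ω ⁅c, ℓ⁆ b = Ω b ⁅ℓ, c⁆ := by
      have e : ⁅c, ℓ⁆ = -⁅ℓ, c⁆ := neg_eq_iff_eq_neg.mp (lie_skew ℓ c)
      rw [e, map_neg, LinearMap.neg_apply, hskew]; ring
    linarith
  refine ⟨hℓne, hself, ?_⟩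
  intro X Y hXY hmem h
  have hA : ∀ u v : L, Ω (sad u v) ℓ = -(1/3) * Ω v ⁅u, ℓ⁆ := by
    intro u v
    have h0 : Ω ⁅u, v⁆ ℓ = 0 := by rw [hskew, hΩbr]; ring
    rw [hsad, h0]; ring
  have hB : ∀ u c : L, Ω (sad u ℓ) c = (1/3) * Ω ⁅u, ℓ⁆ c := by
    intro u c; rw [hsad, hΩbr]; ring
  obtain ⟨a, b, hab⟩ := Submodule.mem_span_pair.mp hmem
  have hw : Ω ⁅X, Y⁆ ⁅X, Y⁆ = 0 := by
    have := hskew ⁅X, Y⁆ ⁅X, Y⁆; linarith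
  have hXℓ : ⁅X, ℓ⁆ = b • ⁅X, Y⁆ := by
    rw [← hab]; simp [lie_add, lie_smul]
  have hYℓ : ⁅Y, ℓ⁆ = -(a • ⁅X, Y⁆) := by
    rw [← hab]; simp only [lie_add, lie_smul, lie_self, smul_zero, add_zero, zero_add]
    rw [show ⁅X, Y⁆ = -⁅Y, X⁆ from (lie_skew X Y).symm, smul_neg, neg_neg]
  have t1 : Ω (sad X (sad Y ℓ)) ℓ = 0 := by
    rw [hA, hB, hXℓ, hYℓ]
    simp [hw]
  have t2 : Ω (sad Y (sad X ℓ)) ℓ = 0 := by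
    rw [hA, hB, hXℓ, hYℓ]
    simp [hw]
  have t3 : Ω (sad ⁅X, Y⁆ ℓ) ℓ = 0 := by
    rw [hA]
    have h0 : Ω ℓ ⁅⁅X, Y⁆, ℓ⁆ = 0 := hΩbr _ _
    rw [h0]; ring
  have key : Ω (curvLie sad X Y ℓ) ℓ = 0 := by
    have : Ω (curvLie sad X Y ℓ) ℓ
        = Ω (sad X (sad Y ℓ)) ℓ - Ω (sad Y (sad X ℓ)) ℓ - Ω (sad ⁅X, Y⁆ ℓ) ℓ := by
      simp [curvLie, map_sub, LinearMap.sub_apply]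
    rw [this, t1, t2, t3]; ring
  rcases h with h | h
  · have := h ℓ hmem hℓne
    rw [key] at this
    simp at this
  · have := h ℓ hmem hℓne
    rw [key] at this
    simp at this
end
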